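/- arXiv:1610.09993 — 12 statements merged into one kernel-verified Lean document; each statement's English description precedes it below -/
import Mathlib

section
/- Suppose some edge of G joins a looped vertex to an unlooped vertex, i.e., there exist vertices i, j with ii ∈ E, jj ∉ E and ij ∈ E. Then for every integer r with 1 ≤ r ≤ n, the set P(S^n_{r+}) is not closed. -/
open Matrix

/-- PSD matrices of rank at most `r`, indexed by a finite type. -/
def psdRank (ι : Type) [Fintype ι] [DecidableEq ι] (r : ℕ) : Set (Matrix ι ι ℝ) :=
  {X | X.PosSemidef ∧ X.rank ≤ r}

/-- Coordinate projection onto the entries indexed by `E`. -/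
def proj {n : ℕ} (E : Set (Fin n × Fin n)) (X : Matrix (Fin n) (Fin n) ℝ) : E → ℝ :=
  fun p => X p.1.1 p.1.2

/-- The simple graph underlying the index set `E` (loops discarded). -/
def graphOf {n : ℕ} (E : Set (Fin n × Fin n)) : SimpleGraph (Fin n) where
  Adj i j := i ≠ j ∧ ((i, j) ∈ E ∨ (j, i) ∈ E)
  symm := by
    constructor
    intro i j h
    exact ⟨h.1.symm, h.2.symm⟩
  loopless := by
    constructor
    intro i h
    exact h.1 rfl

lemma psd_offdiag_eq_zero {n : ℕ} {X : Matrix (Fin n) (Fin n) ℝ}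
    (hX : X.PosSemidef) {i j : Fin n} (h0 : X i i = 0) :
    X i j = 0 := by
  by_contra hc
  have hji : X j i = X i j := by
    have h := congrFun (congrFun hX.1 j) i
    simpa [conjTranspose_apply] using h.symm
  set t : ℝ := -(X j j + 1) / (2 * X i j) with ht
  have h := hX.dotProduct_mulVec_nonneg (Pi.single i t + Pi.single j 1 : Fin n → ℝ)
  simp only [star_trivial, mulVec_add, mulVec_single, dotProduct_add, add_dotProduct,
    single_dotProduct, Pi.add_apply] at h
  simp only [MulOpposite.smul_eq_mul_unop, MulOpposite.unop_op, Pi.smul_apply, col_apply, smul_eq_mul] at h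
  rw [h0, hji] at h
  have key : t * X i j = -(X j j + 1) / 2 := by
    rw [ht]; field_simp
  nlinarith [h, key]

/-- If some edge of `G` joins a looped vertex to an unlooped
vertex, then for every integer `r` with `1 ≤ r ≤ n` the set `P(Sⁿᵣ₊)` is not
closed. -/
theorem stmt2 (n : ℕ) (hn : 2 ≤ n) (E : Set (Fin n × Fin n))
    (hup : ∀ p ∈ E, p.1 ≤ p.2)
    (i j : Fin n) (hi : (i, i) ∈ E) (hj : (j, j) ∉ E)
    (hij : (i, j) ∈ E ∨ (j, i) ∈ E)
    (r : ℕ) (hr1 : 1 ≤ r) (hrn : r ≤ n) :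
    ¬ IsClosed (proj E '' psdRank (Fin n) r) := by
  have hne : i ≠ j := fun h => hj (h ▸ hi)
  intro hcl
  set v : ℝ → Fin n → ℝ := fun t m => if m = i then t else if m = j then t⁻¹ else 0 with hv
  set M : ℝ → Matrix (Fin n) (Fin n) ℝ := fun t => vecMulVec (v t) (v t) with hM
  have hmem : ∀ t : ℝ, M t ∈ psdRank (Fin n) r := by
    intro t
    have heq : M t = (replicateRow Unit (v t))ᴴ * (replicateRow Unit (v t)) := by
      rw [conjTranspose_replicateRow, star_trivial]
      show vecMulVec (v t) (v t) = _
      exact vecMulVec_eq Unit _ _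
    constructor
    · rw [heq]; exact posSemidef_conjTranspose_mul_self _
    · calc (M t).rank ≤ (replicateRow Unit (v t)).rank := by
            rw [heq]; exact rank_mul_le_right _ _
        _ ≤ Fintype.card Unit := rank_le_card_height _
        _ ≤ r := by simpa using hr1
  set y : E → ℝ := fun p =>
    if (p.1.1 = i ∧ p.1.2 = j) ∨ (p.1.1 = j ∧ p.1.2 = i) then 1 else 0 with hy
  have hk0 : ∀ k : ℕ, ((k : ℝ) + 1) ≠ 0 := fun k => by positivity
  have htend : Filter.Tendsto (fun k : ℕ => proj E (M ((k : ℝ) + 1)⁻¹))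
      Filter.atTop (nhds y) := by
    rw [tendsto_pi_nhds]
    rintro ⟨⟨a, b⟩, hp⟩
    have hval : ∀ k : ℕ, proj E (M ((k : ℝ) + 1)⁻¹) ⟨(a, b), hp⟩ =
        v ((k : ℝ) + 1)⁻¹ a * v ((k : ℝ) + 1)⁻¹ b := fun k => rfl
    by_cases hai : a = i
    · by_cases hbj : b = j
      · -- value is 1, y = 1
        have hc : ∀ k : ℕ, proj E (M ((k : ℝ) + 1)⁻¹) ⟨(a, b), hp⟩ = 1 := by
          intro k
          rw [hval k]
          have ha' : v ((k : ℝ) + 1)⁻¹ a = ((k : ℝ) + 1)⁻¹ := by simp [hv, hai]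
          have hb' : v ((k : ℝ) + 1)⁻¹ b = ((k : ℝ) + 1) := by
            simp [hv, hbj, Ne.symm hne]
          rw [ha', hb']
          exact inv_mul_cancel₀ (hk0 k)
        have hyv : y ⟨(a, b), hp⟩ = 1 := by simp [hy, hai, hbj]
        simp only [hc, hyv]
        exact tendsto_const_nhds
      · by_cases hbi : b = i
        · -- value t², y = 0
          have hyv : y ⟨(a, b), hp⟩ = 0 := by simp [hy, hai, hbi, hne, hne.symm]
          have hc : (fun k : ℕ => proj E (M ((k : ℝ) + 1)⁻¹) ⟨(a, b), hp⟩) =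
              fun k : ℕ => ((k : ℝ) + 1)⁻¹ * ((k : ℝ) + 1)⁻¹ := by
            funext k; rw [hval k]; simp [hv, hai, hbi]
          rw [hc, hyv]
          have h0 : Filter.Tendsto (fun k : ℕ => ((k : ℝ) + 1)⁻¹) Filter.atTop (nhds 0) := by
            simpa [one_div] using tendsto_one_div_add_atTop_nhds_zero_nat (𝕜 := ℝ)
          simpa using h0.mul h0
        · have hc : ∀ k : ℕ, proj E (M ((k : ℝ) + 1)⁻¹) ⟨(a, b), hp⟩ = 0 := by
            intro k; rw [hval k]; simp [hv, hbi, hbj]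
          have hyv : y ⟨(a, b), hp⟩ = 0 := by simp [hy, hbi, hbj, hai, hne]
          simp only [hc, hyv]
          exact tendsto_const_nhds
    · by_cases haj : a = j
      · by_cases hbi : b = i
        · have hc : ∀ k : ℕ, proj E (M ((k : ℝ) + 1)⁻¹) ⟨(a, b), hp⟩ = 1 := by
            intro k
            rw [hval k]
            have ha' : v ((k : ℝ) + 1)⁻¹ a = ((k : ℝ) + 1) := by
              simp [hv, haj, Ne.symm hne]
            have hb' : v ((k : ℝ) + 1)⁻¹ b = ((k : ℝ) + 1)⁻¹ := by simp [hv, hbi]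
            rw [ha', hb']
            exact mul_inv_cancel₀ (hk0 k)
          have hyv : y ⟨(a, b), hp⟩ = 1 := by simp [hy, haj, hbi]
          simp only [hc, hyv]
          exact tendsto_const_nhds
        · by_cases hbj : b = j
          · exact absurd (by rwa [haj, hbj] at hp : ((j : Fin n), (j : Fin n)) ∈ E) hj
          · have hc : ∀ k : ℕ, proj E (M ((k : ℝ) + 1)⁻¹) ⟨(a, b), hp⟩ = 0 := by
              intro k; rw [hval k]; simp [hv, hbi, hbj]
            have hyv : y ⟨(a, b), hp⟩ = 0 := by simp [hy, hbi, hbj, haj, hne.symm]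
            simp only [hc, hyv]
            exact tendsto_const_nhds
      · have hc : ∀ k : ℕ, proj E (M ((k : ℝ) + 1)⁻¹) ⟨(a, b), hp⟩ = 0 := by
          intro k; rw [hval k]; simp [hv, hai, haj]
        have hyv : y ⟨(a, b), hp⟩ = 0 := by simp [hy, hai, haj]
        simp only [hc, hyv]
        exact tendsto_const_nhds
  have hclmem : y ∈ proj E '' psdRank (Fin n) r := by
    rw [← hcl.closure_eq]
    exact mem_closure_of_tendsto htend
      (Filter.Eventually.of_forall fun k => Set.mem_image_of_mem _ (hmem _))
  obtain ⟨X, ⟨hpsd, _⟩, hXy⟩ := hclmem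
  have h00 : X i i = 0 := by
    have := congrFun hXy ⟨(i, i), hi⟩
    simpa [proj, hy, hne] using this
  have h1 : X i j = 1 := by
    rcases hij with h | h
    · have := congrFun hXy ⟨(i, j), h⟩
      simpa [proj, hy] using this
    · have hh := congrFun hXy ⟨(j, i), h⟩
      have hji : X j i = 1 := by simpa [proj, hy] using hh
      have hsym : X i j = X j i := by
        have h2 := congrFun (congrFun hpsd.1 i) j
        simpa [conjTranspose_apply] using h2.symm
      rw [hsym, hji]
  have := psd_offdiag_eq_zero (j := j) hpsd h00
  rw [h1] at this
  exact one_ne_zero this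
end

section
/- Let H_1,…,H_k be a partition of V = {1,…,n} such that every pair ij ∈ E has both endpoints in the same block H_i, and set n_i = |H_i|. Then P(S^n_{r+}) is closed if and only if for every i = 1,…,k the restricted projection P_{H_i}(S^{n_i}_{r+}) is closed, where P_{H_i} : S^{n_i} → ℝ^{E_i} is the coordinate projection onto the pairs E_i of E with both endpoints in H_i. -/
open Matrix

lemma mem_psdRank_iff {ι : Type} [Fintype ι] [DecidableEq ι] {r : ℕ} {X : Matrix ι ι ℝ} :
    X ∈ psdRank ι r ↔ ∃ B : Matrix ι (Fin r) ℝ, X = B * Bᵀ := by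
  classical
  constructor
  · rintro ⟨hpsd, hrank⟩
    have hH : X.IsHermitian := hpsd.isHermitian
    set U : Matrix ι ι ℝ := (hH.eigenvectorUnitary : Matrix ι ι ℝ) with hU
    set d : ι → ℝ := hH.eigenvalues with hd
    have hcard : Fintype.card {i // d i ≠ 0} ≤ Fintype.card (Fin r) := by
      rw [Fintype.card_fin, ← hH.rank_eq_card_non_zero_eigs]; exact hrank
    obtain ⟨f⟩ := Function.Embedding.nonempty_of_card_le hcard
    set B : Matrix ι (Fin r) ℝ := fun v j =>
      if h : ∃ t, f t = j then U v (h.choose : {i // d i ≠ 0}).1 * Real.sqrt (d h.choose.1)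
      else 0 with hB
    have hBf : ∀ (v : ι) (t : {i // d i ≠ 0}),
        B v (f t) = U v t.1 * Real.sqrt (d t.1) := by
      intro v t
      have hex : ∃ t', f t' = f t := ⟨t, rfl⟩
      have : hex.choose = t := f.injective hex.choose_spec
      rw [hB]
      dsimp only
      rw [dif_pos hex, this]
    have hXentry : X = U * diagonal d * Uᵀ := by
      have h := hH.spectral_theorem
      simpa [Matrix.star_eq_conjTranspose, conjTranspose_eq_transpose_of_trivial,
        RCLike.ofReal_real_eq_id] using h
    refine ⟨B, ?_⟩
    ext u v
    rw [hXentry]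
    have lhs : (U * diagonal d * Uᵀ) u v = ∑ m : ι, U u m * d m * U v m := by
      simp [Matrix.mul_apply, Matrix.diagonal_apply, mul_ite, mul_zero,
        Finset.sum_ite_eq', Finset.mem_univ]
    have rhs : (B * Bᵀ) u v = ∑ j : Fin r, B u j * B v j := by
      simp [Matrix.mul_apply, Matrix.transpose_apply]
    rw [lhs, rhs]
    have step1 : ∑ j : Fin r, B u j * B v j
        = ∑ j ∈ Finset.univ.image f, B u j * B v j := by
      refine (Finset.sum_subset (Finset.subset_univ _) ?_).symm
      intro j _ hj
      have : ¬ ∃ t, f t = j := by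
        intro ⟨t, ht⟩
        exact hj (Finset.mem_image.mpr ⟨t, Finset.mem_univ t, ht⟩)
      rw [hB]
      dsimp only
      rw [dif_neg this, zero_mul]
    have step2 : ∑ j ∈ Finset.univ.image f, B u j * B v j
        = ∑ t : {i // d i ≠ 0}, U u t.1 * d t.1 * U v t.1 := by
      rw [Finset.sum_image (fun a _ b _ h => f.injective h)]
      refine Finset.sum_congr rfl fun t _ => ?_
      rw [hBf, hBf]
      have h0 : 0 ≤ d t.1 := hpsd.eigenvalues_nonneg t.1
      have key : (U u t.1 * Real.sqrt (d t.1)) * (U v t.1 * Real.sqrt (d t.1))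
          = U u t.1 * U v t.1 * (Real.sqrt (d t.1) * Real.sqrt (d t.1)) := by ring
      rw [key, Real.mul_self_sqrt h0]
      ring
    have step3 : ∑ t : {i // d i ≠ 0}, U u t.1 * d t.1 * U v t.1
        = ∑ m : ι, U u m * d m * U v m := by
      have e2 : ∑ m ∈ Finset.univ.filter (fun m => d m ≠ 0), U u m * d m * U v m
          = ∑ t : {i // d i ≠ 0}, U u t.1 * d t.1 * U v t.1 :=
        Finset.sum_subtype _ (by simp) _
      have e1 : ∑ m ∈ Finset.univ.filter (fun m => d m ≠ 0), U u m * d m * U v m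
          = ∑ m : ι, U u m * d m * U v m :=
        Finset.sum_filter_of_ne (fun x _ hx => by
          intro h0; exact absurd (by simp [h0]) hx)
      rw [← e2, e1]
    rw [step1, step2, step3]
  · rintro ⟨B, rfl⟩
    refine ⟨?_, ?_⟩
    · have := posSemidef_self_mul_conjTranspose B
      rwa [conjTranspose_eq_transpose_of_trivial] at this
    · calc (B * Bᵀ).rank ≤ B.rank := rank_mul_le_left _ _
        _ ≤ Fintype.card (Fin r) := rank_le_card_width B
        _ = r := Fintype.card_fin r

lemma submatrix_mem_psdRank {ι κ : Type} [Fintype ι] [DecidableEq ι] [Fintype κ]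
    [DecidableEq κ] {r : ℕ} {X : Matrix ι ι ℝ} (g : κ → ι) (hX : X ∈ psdRank ι r) :
    X.submatrix g g ∈ psdRank κ r := by
  obtain ⟨B, rfl⟩ := mem_psdRank_iff.mp hX
  refine mem_psdRank_iff.mpr ⟨B.submatrix g id, ?_⟩
  ext a b
  simp [Matrix.mul_apply, Matrix.submatrix_apply]

/-- Let `H₁,…,H_k` be a partition of the vertices (encoded by a
surjective colouring `c : Fin n → Fin k`, with blocks `H_i = c⁻¹(i)`) such that
every pair in `E` has both endpoints in the same block.  Then `P(Sⁿᵣ₊)` is closed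
if and only if each restricted projection `P_{H_i}(Sⁿⁱᵣ₊)` is closed. -/
theorem stmt4 (n k : ℕ) (hn : 2 ≤ n) (E : Set (Fin n × Fin n))
    (hup : ∀ p ∈ E, p.1 ≤ p.2)
    (c : Fin n → Fin k) (hsurj : Function.Surjective c)
    (hpart : ∀ p ∈ E, c p.1 = c p.2) (r : ℕ) :
    IsClosed (proj E '' psdRank (Fin n) r) ↔
      ∀ i : Fin k,
        IsClosed ((fun X : Matrix {v : Fin n // c v = i} {v : Fin n // c v = i} ℝ =>
            fun q : {e : Fin n × Fin n // e ∈ E ∧ c e.1 = i ∧ c e.2 = i} =>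
              X ⟨q.1.1, q.2.2.1⟩ ⟨q.1.2, q.2.2.2⟩) ''
          psdRank {v : Fin n // c v = i} r) := by
  classical
  set F := fun (i : Fin k)
      (X : Matrix {v : Fin n // c v = i} {v : Fin n // c v = i} ℝ) =>
      fun q : {e : Fin n × Fin n // e ∈ E ∧ c e.1 = i ∧ c e.2 = i} =>
        X ⟨q.1.1, q.2.2.1⟩ ⟨q.1.2, q.2.2.2⟩ with hF
  set S := fun i : Fin k => F i '' psdRank {v : Fin n // c v = i} r with hS
  set res := fun (i : Fin k) (y : E → ℝ)
      (q : {e : Fin n × Fin n // e ∈ E ∧ c e.1 = i ∧ c e.2 = i}) =>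
      y ⟨q.1, q.2.1⟩ with hres
  set ψ := fun (i : Fin k) (z : {e : Fin n × Fin n // e ∈ E ∧ c e.1 = i ∧ c e.2 = i} → ℝ)
      (e : E) =>
      if h : c e.1.1 = i then z ⟨e.1, e.2, h, (hpart e.1 e.2).symm.trans h⟩ else 0 with hψ
  -- Key identity (1)
  have key1 : proj E '' psdRank (Fin n) r = {y | ∀ i, res i y ∈ S i} := by
    apply Set.Subset.antisymm
    · rintro y ⟨X, hX, rfl⟩ i
      exact ⟨X.submatrix Subtype.val Subtype.val,
        submatrix_mem_psdRank _ hX, rfl⟩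
    · intro y hy
      choose Xm hXmem hXeq using hy
      choose B hB using fun i => mem_psdRank_iff.mp (hXmem i)
      set M : Matrix (Fin n) (Fin r) ℝ := fun v j => B (c v) ⟨v, rfl⟩ j with hM
      have hMB : ∀ (v : Fin n) (i : Fin k) (h : c v = i) (j : Fin r),
          M v j = B i ⟨v, h⟩ j := by
        intro v i h j; subst h; rfl
      refine ⟨M * Mᵀ, mem_psdRank_iff.mpr ⟨M, rfl⟩, ?_⟩
      funext e
      have h2 : c e.1.2 = c e.1.1 := (hpart e.1 e.2).symm
      have : proj E (M * Mᵀ) e = ∑ j : Fin r, M e.1.1 j * M e.1.2 j := by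
        simp [proj, Matrix.mul_apply]
      rw [this]
      have : ∀ j : Fin r, M e.1.1 j * M e.1.2 j
          = B (c e.1.1) ⟨e.1.1, rfl⟩ j * B (c e.1.1) ⟨e.1.2, h2⟩ j := by
        intro j; rw [hMB e.1.1 (c e.1.1) rfl j, hMB e.1.2 (c e.1.1) h2 j]
      rw [Finset.sum_congr rfl (fun j _ => this j)]
      have : ∑ j : Fin r, B (c e.1.1) ⟨e.1.1, rfl⟩ j * B (c e.1.1) ⟨e.1.2, h2⟩ j
          = (B (c e.1.1) * (B (c e.1.1))ᵀ) ⟨e.1.1, rfl⟩ ⟨e.1.2, h2⟩ := by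
        simp [Matrix.mul_apply]
      rw [this, ← hB (c e.1.1)]
      have := congrFun (hXeq (c e.1.1)) ⟨e.1, e.2, rfl, h2⟩
      exact this
  -- Key identity (2)
  have key2 : ∀ i, S i = ψ i ⁻¹' (proj E '' psdRank (Fin n) r) := by
    intro i
    apply Set.Subset.antisymm
    · rintro z ⟨Xi, hXi, rfl⟩
      obtain ⟨B, hB⟩ := mem_psdRank_iff.mp hXi
      set M : Matrix (Fin n) (Fin r) ℝ := fun v j =>
        if h : c v = i then B ⟨v, h⟩ j else 0 with hM
      refine ⟨M * Mᵀ, mem_psdRank_iff.mpr ⟨M, rfl⟩, ?_⟩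
      funext e
      by_cases h : c e.1.1 = i
      · have h2 : c e.1.2 = i := (hpart e.1 e.2).symm.trans h
        have hsum : proj E (M * Mᵀ) e = ∑ j : Fin r, M e.1.1 j * M e.1.2 j := by
          simp [proj, Matrix.mul_apply]
        have hco : ∀ j : Fin r, M e.1.1 j * M e.1.2 j
            = B ⟨e.1.1, h⟩ j * B ⟨e.1.2, h2⟩ j := by
          intro j
          rw [hM]; dsimp only; rw [dif_pos h, dif_pos h2]
        rw [hsum, Finset.sum_congr rfl (fun j _ => hco j)]
        have : ∑ j : Fin r, B ⟨e.1.1, h⟩ j * B ⟨e.1.2, h2⟩ j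
            = (B * Bᵀ) ⟨e.1.1, h⟩ ⟨e.1.2, h2⟩ := by
          simp [Matrix.mul_apply]
        rw [this, ← hB]
        rw [hψ]; dsimp only; rw [dif_pos h]
      · have hsum : proj E (M * Mᵀ) e = ∑ j : Fin r, M e.1.1 j * M e.1.2 j := by
          simp [proj, Matrix.mul_apply]
        rw [hsum]
        have : ∀ j : Fin r, M e.1.1 j * M e.1.2 j = 0 := by
          intro j; rw [hM]; dsimp only; rw [dif_neg h, zero_mul]
        rw [Finset.sum_congr rfl (fun j _ => this j), Finset.sum_const_zero]
        rw [hψ]; dsimp only; rw [dif_neg h]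
    · rintro z ⟨X, hX, hproj⟩
      refine ⟨X.submatrix Subtype.val Subtype.val,
        submatrix_mem_psdRank _ hX, ?_⟩
      funext q
      have : F i (X.submatrix Subtype.val Subtype.val) q = proj E X ⟨q.1, q.2.1⟩ := rfl
      rw [this, hproj]
      rw [hψ]; dsimp only; rw [dif_pos q.2.2.1]
  constructor
  · intro hcl i
    have goal : IsClosed (S i) := by
      rw [key2 i]
      refine hcl.preimage ?_
      refine continuous_pi fun e => ?_
      by_cases h : c e.1.1 = i
      · simp only [hψ, dif_pos h]
        exact continuous_apply _
      · simp only [hψ, dif_neg h]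
        exact continuous_const
    exact goal
  · intro hcl
    rw [key1]
    have : {y : E → ℝ | ∀ i, res i y ∈ S i} = ⋂ i, res i ⁻¹' S i := by
      ext y; simp
    rw [this]
    exact isClosed_iInter fun i =>
      (hcl i).preimage (continuous_pi fun q => continuous_apply _)
end

section
/- For any r with 0 ≤ r ≤ n, P(S^n_{r+}) is closed if and only if for every connected component H of G the restricted projection P_H(S^{|H|}_{r+}) is closed, where P_H : S^{|H|} → ℝ^{E_H} is the coordinate projection onto the pairs E_H of E with both endpoints in H. -/
open Matrix

open scoped Classical

lemma psdRank_iff_gram {ι : Type} [Fintype ι] [DecidableEq ι] (r : ℕ) (X : Matrix ι ι ℝ) :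
    X ∈ psdRank ι r ↔ ∃ B : Matrix ι (Fin r) ℝ, X = B * Bᵀ := by
  constructor
  · rintro ⟨hpsd, hrank⟩
    have hH : X.IsHermitian := hpsd.1
    obtain ⟨e⟩ : Nonempty ({i // hH.eigenvalues i ≠ 0} ↪ Fin r) :=
      Function.Embedding.nonempty_of_card_le (by
        rw [← hH.rank_eq_card_non_zero_eigs]; simpa using hrank)
    set U : Matrix ι ι ℝ := (hH.eigenvectorUnitary : Matrix ι ι ℝ) with hU
    set D : Matrix ι ι ℝ := U * Matrix.diagonal (fun i => Real.sqrt (hH.eigenvalues i)) with hD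
    have hDzero : ∀ i j, hH.eigenvalues j = 0 → D i j = 0 := by
      intro i j hj
      simp [hD, Matrix.mul_diagonal, hj]
    have hXD : X = D * Dᵀ := by
      have hs := hH.spectral_theorem
      simp only [Unitary.conjStarAlgAut_apply, Unitary.coe_star] at hs
      rw [Matrix.star_eq_conjTranspose, Matrix.conjTranspose_eq_transpose_of_trivial,
        RCLike.ofReal_real_eq_id, Function.id_comp] at hs
      have h2 : D * Dᵀ = U * Matrix.diagonal hH.eigenvalues * Uᵀ := by
        rw [hD, Matrix.transpose_mul, Matrix.diagonal_transpose, Matrix.mul_assoc,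
          ← Matrix.mul_assoc (Matrix.diagonal _), Matrix.diagonal_mul_diagonal]
        have hss : (fun i => Real.sqrt (hH.eigenvalues i) * Real.sqrt (hH.eigenvalues i))
            = hH.eigenvalues := funext fun i => Real.mul_self_sqrt (hpsd.eigenvalues_nonneg i)
        rw [hss, Matrix.mul_assoc]
      rw [h2, ← hs]
    refine ⟨fun i k => if h : ∃ j, e j = k then D i h.choose.1 else 0, ?_⟩
    ext i i'
    rw [congrFun (congrFun hXD i) i']
    simp only [Matrix.mul_apply, Matrix.transpose_apply]
    set F : Fin r → ℝ := fun k =>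
      (if h : ∃ j, e j = k then D i h.choose.1 else 0) *
      (if h : ∃ j, e j = k then D i' h.choose.1 else 0) with hF
    show ∑ j, D i j * D i' j = ∑ k, F k
    have h2 : ∑ k ∈ Finset.univ.map e, F k = ∑ k, F k := by
      refine Finset.sum_subset (Finset.subset_univ _) (fun k _ hk => ?_)
      have : ¬ ∃ j, e j = k := by simpa [Finset.mem_map] using hk
      simp only [hF]
      rw [dif_neg this, zero_mul]
    have h3 : ∑ k ∈ Finset.univ.map e, F k = ∑ j : {i // hH.eigenvalues i ≠ 0}, D i j.1 * D i' j.1 := by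
      rw [Finset.sum_map]
      refine Finset.sum_congr rfl fun j _ => ?_
      have hex : ∃ j', e j' = e j := ⟨j, rfl⟩
      have hch : hex.choose = j := e.injective hex.choose_spec
      simp only [hF]
      rw [dif_pos hex, dif_pos hex, hch]
    have h4 : ∑ j ∈ Finset.univ.filter (fun j => hH.eigenvalues j ≠ 0), D i j * D i' j
        = ∑ j : {i // hH.eigenvalues i ≠ 0}, D i j.1 * D i' j.1 :=
      Finset.sum_subtype _ (by simp) _
    have h5 : ∑ j ∈ Finset.univ.filter (fun j => hH.eigenvalues j ≠ 0), D i j * D i' j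
        = ∑ j, D i j * D i' j := by
      refine Finset.sum_subset (Finset.filter_subset _ _) (fun j _ hj => ?_)
      have : hH.eigenvalues j = 0 := by simpa using hj
      rw [hDzero i j this, zero_mul]
    rw [← h2, h3, ← h4, h5]
  · rintro ⟨B, rfl⟩
    constructor
    · have := Matrix.posSemidef_self_mul_conjTranspose B
      rwa [Matrix.conjTranspose_eq_transpose_of_trivial] at this
    · have h := Matrix.rank_self_mul_conjTranspose B
      rw [Matrix.conjTranspose_eq_transpose_of_trivial] at h
      rw [h]
      exact (Matrix.rank_le_card_width B).trans (by simp)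

lemma reach_of_mem {n : ℕ} {E : Set (Fin n × Fin n)} {p : Fin n × Fin n} (hp : p ∈ E) :
    (graphOf E).Reachable p.1 p.2 := by
  by_cases h : p.1 = p.2
  · rw [h]
  · exact SimpleGraph.Adj.reachable ⟨h, Or.inl hp⟩

/-- For any `r ≤ n`, `P(Sⁿᵣ₊)` is closed if and only if for
every connected component `H` of `G` (here: the component of each vertex `v`,
i.e. the vertices reachable from `v`) the restricted projection
`P_H(S^{|H|}ᵣ₊)` is closed. -/
theorem stmt5 (n : ℕ) (hn : 2 ≤ n) (E : Set (Fin n × Fin n))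
    (hup : ∀ p ∈ E, p.1 ≤ p.2) (r : ℕ) (hr : r ≤ n) :
    IsClosed (proj E '' psdRank (Fin n) r) ↔
      ∀ v : Fin n,
        IsClosed ((fun X : Matrix {u : Fin n // (graphOf E).Reachable u v}
              {u : Fin n // (graphOf E).Reachable u v} ℝ =>
            fun q : {e : Fin n × Fin n //
                e ∈ E ∧ (graphOf E).Reachable e.1 v ∧ (graphOf E).Reachable e.2 v} =>
              X ⟨q.1.1, q.2.2.1⟩ ⟨q.1.2, q.2.2.2⟩) ''
          psdRank {u : Fin n // (graphOf E).Reachable u v} r) := by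
  have hiff : ∀ (v : Fin n), ∀ p ∈ E,
      ((graphOf E).Reachable p.1 v ↔ (graphOf E).Reachable p.2 v) := by
    intro v p hp
    have h := reach_of_mem hp
    exact ⟨fun h1 => h.symm.trans h1, fun h2 => h.trans h2⟩
  constructor
  · -- global closed → each component closed
    intro hclosed v
    set σ : ({e : Fin n × Fin n //
        e ∈ E ∧ (graphOf E).Reachable e.1 v ∧ (graphOf E).Reachable e.2 v} → ℝ) → (E → ℝ) :=
      fun g e => if h : (graphOf E).Reachable e.1.1 v ∧ (graphOf E).Reachable e.1.2 v
        then g ⟨e.1, e.2, h.1, h.2⟩ else 0 with hσ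
    have hcont : Continuous σ := by
      apply continuous_pi
      intro e
      by_cases h : (graphOf E).Reachable e.1.1 v ∧ (graphOf E).Reachable e.1.2 v
      · simp only [hσ, dif_pos h]
        exact continuous_apply _
      · simp only [hσ, dif_neg h]
        exact continuous_const
    have himg : ((fun X : Matrix {u : Fin n // (graphOf E).Reachable u v}
              {u : Fin n // (graphOf E).Reachable u v} ℝ =>
            fun q : {e : Fin n × Fin n //
                e ∈ E ∧ (graphOf E).Reachable e.1 v ∧ (graphOf E).Reachable e.2 v} =>
              X ⟨q.1.1, q.2.2.1⟩ ⟨q.1.2, q.2.2.2⟩) ''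
          psdRank {u : Fin n // (graphOf E).Reachable u v} r)
        = σ ⁻¹' (proj E '' psdRank (Fin n) r) := by
      ext g
      constructor
      · rintro ⟨Y, hY, rfl⟩
        obtain ⟨B, rfl⟩ := (psdRank_iff_gram _ _).mp hY
        set B' : Matrix (Fin n) (Fin r) ℝ :=
          fun i k => if h : (graphOf E).Reachable i v then B ⟨i, h⟩ k else 0 with hB'
        refine ⟨B' * B'ᵀ, (psdRank_iff_gram _ _).mpr ⟨B', rfl⟩, ?_⟩
        funext e
        by_cases h : (graphOf E).Reachable e.1.1 v ∧ (graphOf E).Reachable e.1.2 v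
        · simp only [hσ, dif_pos h, proj, Matrix.mul_apply, Matrix.transpose_apply]
          refine Finset.sum_congr rfl fun k _ => ?_
          simp only [hB', dif_pos h.1, dif_pos h.2]
        · have h1 : ¬ (graphOf E).Reachable e.1.1 v :=
            fun hc => h ⟨hc, (hiff v e.1 e.2).mp hc⟩
          simp only [hσ, dif_neg h, proj, Matrix.mul_apply, Matrix.transpose_apply]
          refine Finset.sum_eq_zero fun k _ => ?_
          simp only [hB', dif_neg h1, zero_mul]
      · rintro ⟨X, hX, hprojX⟩
        obtain ⟨B, rfl⟩ := (psdRank_iff_gram _ _).mp hX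
        set B'' : Matrix {u : Fin n // (graphOf E).Reachable u v} (Fin r) ℝ :=
          fun u k => B u.1 k with hB''
        refine ⟨B'' * B''ᵀ, (psdRank_iff_gram _ _).mpr ⟨B'', rfl⟩, ?_⟩
        funext q
        have h0 : proj E (B * Bᵀ) ⟨q.1, q.2.1⟩ = σ g ⟨q.1, q.2.1⟩ := congrFun hprojX _
        have h1 : σ g ⟨q.1, q.2.1⟩ = g q := by
          simp only [hσ]
          rw [dif_pos ⟨q.2.2.1, q.2.2.2⟩]
        have h2 : (B'' * B''ᵀ)
            ⟨q.1.1, q.2.2.1⟩ ⟨q.1.2, q.2.2.2⟩ = proj E (B * Bᵀ) ⟨q.1, q.2.1⟩ := by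
          simp only [hB'', proj, Matrix.mul_apply, Matrix.transpose_apply]
          rfl
        show (B'' * B''ᵀ) ⟨q.1.1, q.2.2.1⟩ ⟨q.1.2, q.2.2.2⟩ = g q
        rw [h2, h0, h1]
    rw [himg]
    exact hclosed.preimage hcont
  · -- each component closed → global closed
    intro hcomp
    have himg : proj E '' psdRank (Fin n) r =
        ⋂ v : Fin n, (fun f : (E → ℝ) =>
          fun q : {e : Fin n × Fin n //
              e ∈ E ∧ (graphOf E).Reachable e.1 v ∧ (graphOf E).Reachable e.2 v} =>
            f ⟨q.1, q.2.1⟩) ⁻¹'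
          ((fun X : Matrix {u : Fin n // (graphOf E).Reachable u v}
              {u : Fin n // (graphOf E).Reachable u v} ℝ =>
            fun q : {e : Fin n × Fin n //
                e ∈ E ∧ (graphOf E).Reachable e.1 v ∧ (graphOf E).Reachable e.2 v} =>
              X ⟨q.1.1, q.2.2.1⟩ ⟨q.1.2, q.2.2.2⟩) ''
          psdRank {u : Fin n // (graphOf E).Reachable u v} r) := by
      ext f
      simp only [Set.mem_iInter, Set.mem_preimage]
      constructor
      · rintro ⟨X, hX, rfl⟩ v
        obtain ⟨B, rfl⟩ := (psdRank_iff_gram _ _).mp hX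
        set B'' : Matrix {u : Fin n // (graphOf E).Reachable u v} (Fin r) ℝ :=
          fun u k => B u.1 k with hB''
        refine ⟨B'' * B''ᵀ, (psdRank_iff_gram _ _).mpr ⟨B'', rfl⟩, ?_⟩
        funext q
        simp only [hB'', proj, Matrix.mul_apply, Matrix.transpose_apply]
        rfl
      · intro hf
        choose Y hY hYeq using hf
        choose B hB using fun v => (psdRank_iff_gram r (Y v)).mp (hY v)
        let s : Setoid (Fin n) := (graphOf E).reachableSetoid
        let c : Fin n → Fin n := fun i => (Quotient.mk s i).out
        have hc1 : ∀ i, (graphOf E).Reachable i (c i) := fun i =>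
          ((Quotient.mk_out i : (graphOf E).Reachable ((Quotient.mk s i).out) i)).symm
        have hc2 : ∀ i j, (graphOf E).Reachable i j → c i = c j := fun i j h =>
          congrArg Quotient.out (Quotient.sound h)
        set g : Matrix (Fin n) (Fin r) ℝ := fun i => B (c i) ⟨i, hc1 i⟩ with hg
        refine ⟨g * gᵀ, (psdRank_iff_gram _ _).mpr ⟨g, rfl⟩, ?_⟩
        funext e
        have hBcast : ∀ (v w : Fin n) (h : v = w) (i : Fin n)
            (hi : (graphOf E).Reachable i v) (hj : (graphOf E).Reachable i w),
            B v ⟨i, hi⟩ = B w ⟨i, hj⟩ := by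
          intro v w h i hi hj
          subst h
          rfl
        have hre : (graphOf E).Reachable e.1.1 e.1.2 := reach_of_mem e.2
        set w : Fin n := c e.1.1 with hw
        have h1 : (graphOf E).Reachable e.1.1 w := hc1 e.1.1
        have h2 : (graphOf E).Reachable e.1.2 w := hre.symm.trans h1
        have hg2 : g e.1.2 = B w ⟨e.1.2, h2⟩ :=
          hBcast _ _ ((hc2 _ _ hre).symm) _ _ _
        have hg1 : g e.1.1 = B w ⟨e.1.1, h1⟩ := rfl
        have hkey : Y w ⟨e.1.1, h1⟩ ⟨e.1.2, h2⟩ = f e := by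
          have := congrFun (hYeq w) ⟨e.1, e.2, h1, h2⟩
          exact this
        calc proj E (g * gᵀ) e = ∑ k, g e.1.1 k * g e.1.2 k := by
              simp only [proj, Matrix.mul_apply, Matrix.transpose_apply]
          _ = ∑ k, B w ⟨e.1.1, h1⟩ k * B w ⟨e.1.2, h2⟩ k := by rw [hg1, hg2]
          _ = Y w ⟨e.1.1, h1⟩ ⟨e.1.2, h2⟩ := by
              rw [hB w]
              simp only [Matrix.mul_apply, Matrix.transpose_apply]
          _ = f e := hkey
    rw [himg]
    exact isClosed_iInter fun v => (hcomp v).preimage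
      (continuous_pi fun q => continuous_apply _)
end

section
/- If every vertex of G is looped, i.e., ii ∈ E for all i ∈ V, then P(S^n_{r+}) is closed for every integer r with 0 ≤ r ≤ n. -/
open Matrix

lemma mem_psdRank_iff_s6 {n r : ℕ} (X : Matrix (Fin n) (Fin n) ℝ) :
    (X.PosSemidef ∧ X.rank ≤ r) ↔ ∃ A : Matrix (Fin n) (Fin r) ℝ, X = A * Aᵀ := by
  constructor
  · rintro ⟨hpsd, hrank⟩
    have hH := hpsd.1
    have hcard : Fintype.card {i // hH.eigenvalues i ≠ 0} ≤ Fintype.card (Fin r) := by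
      rw [Fintype.card_fin, ← hH.rank_eq_card_non_zero_eigs]; exact hrank
    obtain ⟨e⟩ := Function.Embedding.nonempty_of_card_le hcard
    set C : Matrix (Fin n) (Fin r) ℝ := fun i k =>
      if h : hH.eigenvalues i ≠ 0 then
        (if e ⟨i, h⟩ = k then Real.sqrt (hH.eigenvalues i) else 0) else 0 with hC
    have hCC : C * Cᵀ = Matrix.diagonal hH.eigenvalues := by
      ext i j
      rw [Matrix.mul_apply, Matrix.diagonal_apply]
      by_cases hij : i = j
      · subst hij
        rw [if_pos rfl]
        by_cases h0 : hH.eigenvalues i ≠ 0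
        · simp only [Matrix.transpose_apply]
          simp only [hC, Matrix.transpose_apply, dif_pos h0, ite_mul, zero_mul, mul_ite, mul_zero]
          rw [Finset.sum_ite_eq (Finset.univ) (e ⟨i, h0⟩)]
          simp [Real.mul_self_sqrt (hpsd.eigenvalues_nonneg i)]
        · push_neg at h0
          simp [hC, h0]
      · rw [if_neg hij]
        apply Finset.sum_eq_zero
        intro k _
        simp only [Matrix.transpose_apply]
        simp only [hC]
        by_cases h0 : hH.eigenvalues i ≠ 0
        · by_cases h1 : hH.eigenvalues j ≠ 0
          · simp only [dif_pos h0, dif_pos h1]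
            by_cases he : e ⟨i, h0⟩ = k
            · have : ¬ (e ⟨j, h1⟩ = k) := by
                intro he'
                exact hij (congrArg Subtype.val (e.injective (he.trans he'.symm)))
              simp [he, this]
            · simp [he]
          · simp [dif_neg h1]
        · simp [dif_neg h0]
    refine ⟨(hH.eigenvectorUnitary : Matrix (Fin n) (Fin n) ℝ) * C, ?_⟩
    rw [Matrix.transpose_mul, ← Matrix.mul_assoc, Matrix.mul_assoc _ C, hCC]
    conv_lhs => rw [hH.spectral_theorem]
    rw [Unitary.conjStarAlgAut_apply, Matrix.star_eq_conjTranspose, Matrix.conjTranspose_eq_transpose_of_trivial]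
    norm_num [Function.comp_def]
  · rintro ⟨A, rfl⟩
    refine ⟨?_, ?_⟩
    · have := Matrix.posSemidef_self_mul_conjTranspose A
      rwa [Matrix.conjTranspose_eq_transpose_of_trivial] at this
    · exact (Matrix.rank_mul_le_left A Aᵀ).trans
        ((Matrix.rank_le_card_width A).trans (Fintype.card_fin r).le)

/-- If every vertex of `G` is looped then `P(Sⁿᵣ₊)` is closed
for every integer `r` with `0 ≤ r ≤ n`. -/
theorem stmt6 (n : ℕ) (hn : 2 ≤ n) (E : Set (Fin n × Fin n))
    (hup : ∀ p ∈ E, p.1 ≤ p.2)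
    (hloops : ∀ i : Fin n, (i, i) ∈ E)
    (r : ℕ) (hr : r ≤ n) :
    IsClosed (proj E '' psdRank (Fin n) r) := by
  classical
  have hset : proj E '' psdRank (Fin n) r
      = Set.range (fun A : Matrix (Fin n) (Fin r) ℝ => proj E (A * Aᵀ)) := by
    ext y
    constructor
    · rintro ⟨X, hX, rfl⟩
      obtain ⟨A, rfl⟩ := (mem_psdRank_iff_s6 X).1 hX
      exact ⟨A, rfl⟩
    · rintro ⟨A, rfl⟩
      exact ⟨A * Aᵀ, (mem_psdRank_iff_s6 _).2 ⟨A, rfl⟩, rfl⟩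
  rw [hset]
  set g : Matrix (Fin n) (Fin r) ℝ → (E → ℝ) := fun A => proj E (A * Aᵀ) with hg
  have hgc : Continuous g := by
    apply continuous_pi
    intro p
    have he : (fun A : Matrix (Fin n) (Fin r) ℝ => g A p)
        = fun A => ∑ k, A p.1.1 k * A p.1.2 k := by
      funext A; simp [hg, proj, Matrix.mul_apply]
    rw [he]
    exact continuous_finset_sum _ fun k _ =>
      ((continuous_apply_apply _ (k : Fin r)).mul
        (continuous_apply_apply _ (k : Fin r)))
  have sq_le : ∀ (B : Matrix (Fin n) (Fin r) ℝ) (i : Fin n) (k : Fin r),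
      (B i k)^2 ≤ (B * Bᵀ) i i := by
    intro B i k
    rw [Matrix.mul_apply]
    have := Finset.single_le_sum (f := fun l => B i l * (Bᵀ) l i)
      (fun l _ => by simp [Matrix.transpose_apply, mul_self_nonneg]) (Finset.mem_univ k)
    simpa [Matrix.transpose_apply, pow_two] using this
  apply IsSeqClosed.isClosed
  intro x y hx hlim
  choose A hA using hx
  have hcoord : ∀ p : E, Filter.Tendsto (fun m => x m p) Filter.atTop (nhds (y p)) :=
    fun p => tendsto_pi_nhds.1 hlim p
  have hbdd : ∀ i : Fin n, ∃ Ci : ℝ, ∀ m : ℕ, x m ⟨(i, i), hloops i⟩ ≤ Ci := by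
    intro i
    obtain ⟨Ci, hCi⟩ := (hcoord ⟨(i, i), hloops i⟩).bddAbove_range
    exact ⟨Ci, fun m => hCi (Set.mem_range_self m)⟩
  choose C hC using hbdd
  have hdiag : ∀ m (i : Fin n), (A m * (A m)ᵀ) i i ≤ C i := by
    intro m i
    have : g (A m) ⟨(i, i), hloops i⟩ = (A m * (A m)ᵀ) i i := rfl
    rw [← this, hA m]
    exact hC i m
  set K : Set (Matrix (Fin n) (Fin r) ℝ) :=
    {B | ∀ i, (B i) ∈ {v : Fin r → ℝ | ∀ k, v k ∈ Set.Icc (-(Real.sqrt (C i))) (Real.sqrt (C i))}}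
    with hK
  have hKc : IsCompact K := by
    apply isCompact_pi_infinite
    intro i
    exact isCompact_pi_infinite fun k => isCompact_Icc
  have hmem : ∀ m, A m ∈ K := by
    intro m i k
    have h1 : (A m i k)^2 ≤ C i := (sq_le (A m) i k).trans (hdiag m i)
    have h2 : |A m i k| ≤ Real.sqrt (C i) := by
      rw [← Real.sqrt_sq_eq_abs]
      exact Real.sqrt_le_sqrt h1
    exact abs_le.1 h2
  haveI : FirstCountableTopology (Matrix (Fin n) (Fin r) ℝ) :=
    inferInstanceAs (FirstCountableTopology (Fin n → Fin r → ℝ))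
  obtain ⟨B, -, φ, hφmono, hφlim⟩ := hKc.tendsto_subseq hmem
  refine ⟨B, ?_⟩
  have h1 : Filter.Tendsto (fun m => g (A (φ m))) Filter.atTop (nhds (g B)) :=
    (hgc.tendsto B).comp hφlim
  have h2 : Filter.Tendsto (fun m => g (A (φ m))) Filter.atTop (nhds y) := by
    simp only [hA]
    exact hlim.comp hφmono.tendsto_atTop
  exact tendsto_nhds_unique h1 h2
end

section
/- Suppose G has no loops and contains a triangle, i.e., three distinct vertices i, j, k with ij ∈ E, ik ∈ E and jk ∈ E. Then P(S^n_{1+}) is not closed. -/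
open Matrix Filter

lemma minor_of_rank_le_one {n : ℕ} (X : Matrix (Fin n) (Fin n) ℝ) (h : X.rank ≤ 1)
    (a b : Fin n) : X a a * X b b = X a b * X b a := by
  by_contra hne
  set P : Matrix (Fin 2) (Fin n) ℝ := Matrix.of fun r c => if ![a, b] r = c then 1 else 0 with hP
  have hM : P * X * Pᵀ = !![X a a, X a b; X b a, X b b] := by
    ext r c
    fin_cases r <;> fin_cases c <;>
      simp only [hP, Matrix.mul_apply, Matrix.of_apply, Matrix.transpose_apply, ite_mul, mul_ite, one_mul, mul_one, zero_mul, mul_zero, Finset.sum_ite_eq, Finset.sum_ite_eq', Finset.mem_univ, if_true] <;>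
      simp
  have hdet : (P * X * Pᵀ).det ≠ 0 := by
    rw [hM, Matrix.det_fin_two_of]
    exact sub_ne_zero.mpr hne
  have hunit : IsUnit (P * X * Pᵀ) := by
    rw [Matrix.isUnit_iff_isUnit_det]
    exact isUnit_iff_ne_zero.mpr hdet
  have h2 : (P * X * Pᵀ).rank = 2 := by
    rw [Matrix.rank_of_isUnit _ hunit]; simp
  have hle : (P * X * Pᵀ).rank ≤ 1 :=
    le_trans (Matrix.rank_mul_le_left _ _) (le_trans (Matrix.rank_mul_le_right _ _) h)
  omega

set_option maxHeartbeats 1000000 in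
lemma key_prod {n : ℕ} (i j k : Fin n) (hij : i ≠ j) (hik : i ≠ k) (hjk : j ≠ k)
    (t : ℝ) (ht : t ≠ 0) (a b : Fin n) (hab : a ≠ b) :
    (if a = i then t else if a = j then t else if a = k then t⁻¹ else 0) *
    (if b = i then t else if b = j then t else if b = k then t⁻¹ else 0) =
      (if (a, b) = (i, k) ∨ (a, b) = (k, i) ∨ (a, b) = (j, k) ∨ (a, b) = (k, j) then 1
       else if (a, b) = (i, j) ∨ (a, b) = (j, i) then t * t else 0) := by
  by_cases hai : a = i <;> by_cases haj : a = j <;> by_cases hak : a = k <;>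
    by_cases hbi : b = i <;> by_cases hbj : b = j <;> by_cases hbk : b = k <;>
    simp_all [Prod.ext_iff, mul_inv_cancel₀ ht, inv_mul_cancel₀ ht]



/-- If `G` has no loops and contains a triangle, then
`P(Sⁿ₁₊)` is not closed. -/
theorem stmt8 (n : ℕ) (hn : 2 ≤ n) (E : Set (Fin n × Fin n))
    (hup : ∀ p ∈ E, p.1 ≤ p.2)
    (hloop : ∀ v : Fin n, (v, v) ∉ E)
    (i j k : Fin n) (hij : i ≠ j) (hik : i ≠ k) (hjk : j ≠ k)
    (e1 : (i, j) ∈ E ∨ (j, i) ∈ E)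
    (e2 : (i, k) ∈ E ∨ (k, i) ∈ E)
    (e3 : (j, k) ∈ E ∨ (k, j) ∈ E) :
    ¬ IsClosed (proj E '' psdRank (Fin n) 1) := by
  show ¬ IsClosed ((fun X => (fun p : E => X p.1.1 p.1.2 : E → ℝ)) ''
    {X : Matrix (Fin n) (Fin n) ℝ | X.PosSemidef ∧ X.rank ≤ 1})

  classical
  set x : ℝ → Fin n → ℝ :=
    fun t v => if v = i then t else if v = j then t else if v = k then t⁻¹ else 0 with hx
  set A : ℝ → Matrix (Fin 1) (Fin n) ℝ := fun t => Matrix.of fun _ v => x t v with hA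
  set Y : ℝ → Matrix (Fin n) (Fin n) ℝ := fun t => (A t)ᴴ * A t with hY
  have hYmem : ∀ t, Y t ∈ {X : Matrix (Fin n) (Fin n) ℝ | X.PosSemidef ∧ X.rank ≤ 1} := by
    intro t
    refine ⟨Matrix.posSemidef_conjTranspose_mul_self _, ?_⟩
    refine le_trans (Matrix.rank_mul_le_right _ _) ?_
    simpa using Matrix.rank_le_card_height (A t)
  have hYapp : ∀ t a b, Y t a b = x t a * x t b := by
    intro t a b
    simp [hY, hA, Matrix.mul_apply, Matrix.conjTranspose_apply]
  have key : ∀ (t : ℝ), t ≠ 0 → ∀ a b : Fin n, a ≠ b → x t a * x t b =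
      (if (a, b) = (i, k) ∨ (a, b) = (k, i) ∨ (a, b) = (j, k) ∨ (a, b) = (k, j) then 1
       else if (a, b) = (i, j) ∨ (a, b) = (j, i) then t * t else 0) := by
    intro t ht a b hab
    rw [hx]
    exact key_prod i j k hij hik hjk t ht a b hab
  set L : E → ℝ := fun p =>
    if p.1 = (i, k) ∨ p.1 = (k, i) ∨ p.1 = (j, k) ∨ p.1 = (k, j) then 1 else 0 with hLdef
  set t : ℕ → ℝ := fun m => ((m : ℝ) + 1)⁻¹ with htdef
  have ht0 : ∀ m, t m ≠ 0 := by
    intro m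
    have : (0 : ℝ) < (m : ℝ) + 1 := by positivity
    simp [htdef, ne_of_gt this]
  have httend : Filter.Tendsto t atTop (nhds 0) := by
    simpa [htdef, one_div] using tendsto_one_div_add_atTop_nhds_zero_nat (𝕜 := ℝ)
  -- the sequence
  set s : ℕ → E → ℝ := fun m => (fun p : E => Y (t m) p.1.1 p.1.2) with hsdef
  have hstend : Filter.Tendsto s atTop (nhds L) := by
    rw [tendsto_pi_nhds]
    rintro ⟨⟨a, b⟩, hp⟩
    have hab : a ≠ b := by
      rintro rfl
      exact hloop a hp
    have hsval : ∀ m, s m ⟨(a, b), hp⟩ =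
        (if (a, b) = (i, k) ∨ (a, b) = (k, i) ∨ (a, b) = (j, k) ∨ (a, b) = (k, j) then 1
         else if (a, b) = (i, j) ∨ (a, b) = (j, i) then t m * t m else 0) := by
      intro m
      rw [hsdef]
      simp only []
      rw [hYapp, key (t m) (ht0 m) a b hab]
    by_cases h1 : (a, b) = (i, k) ∨ (a, b) = (k, i) ∨ (a, b) = (j, k) ∨ (a, b) = (k, j)
    · have hLv : L ⟨(a, b), hp⟩ = 1 := if_pos h1
      rw [hLv]
      refine Tendsto.congr (fun m => ?_) tendsto_const_nhds
      rw [hsval m, if_pos h1]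
    · by_cases h2 : (a, b) = (i, j) ∨ (a, b) = (j, i)
      · have hLv : L ⟨(a, b), hp⟩ = 0 := if_neg h1
        rw [hLv]
        have : Filter.Tendsto (fun m => t m * t m) atTop (nhds 0) := by
          simpa using httend.mul httend
        refine Tendsto.congr (fun m => ?_) this
        rw [hsval m, if_neg h1, if_pos h2]
      · have hLv : L ⟨(a, b), hp⟩ = 0 := if_neg h1
        rw [hLv]
        refine Tendsto.congr (fun m => ?_) tendsto_const_nhds
        rw [hsval m, if_neg h1, if_neg h2]
  have hLnot : L ∉ ((fun X => (fun p : E => X p.1.1 p.1.2 : E → ℝ)) ''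
      {X : Matrix (Fin n) (Fin n) ℝ | X.PosSemidef ∧ X.rank ≤ 1}) := by
    rintro ⟨X, ⟨hpsd, hrank⟩, hPX⟩
    have hsym : ∀ a b, X b a = X a b := by
      intro a b
      have := hpsd.1.apply a b
      simpa using this
    have hval : ∀ a b : Fin n, ((a, b) ∈ E) →
        X a b = (if (a, b) = (i, k) ∨ (a, b) = (k, i) ∨ (a, b) = (j, k) ∨ (a, b) = (k, j)
          then 1 else 0) := by
      intro a b hmem
      have := congrFun hPX ⟨(a, b), hmem⟩
      simpa [hLdef] using this
    have hik1 : X i k = 1 := by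
      rcases e2 with h | h
      · simpa using hval i k h
      · rw [← hsym]
        have := hval k i h
        simpa [Prod.ext_iff, hik, hik.symm] using this
    have hjk1 : X j k = 1 := by
      rcases e3 with h | h
      · have := hval j k h
        simpa [Prod.ext_iff, hij, hij.symm, hjk, hjk.symm] using this
      · rw [← hsym]
        have := hval k j h
        simpa [Prod.ext_iff, hij, hij.symm, hjk, hjk.symm, hik, hik.symm] using this
    have hij0 : X i j = 0 := by
      rcases e1 with h | h
      · have := hval i j h
        simpa [Prod.ext_iff, hij, hij.symm, hjk, hjk.symm, hik, hik.symm] using this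
      · rw [← hsym]
        have := hval j i h
        simpa [Prod.ext_iff, hij, hij.symm, hjk, hjk.symm, hik, hik.symm] using this
    have m1 : X i i * X k k = 1 := by
      rw [minor_of_rank_le_one X hrank i k, hik1, hsym, hik1]; ring
    have m2 : X j j * X k k = 1 := by
      rw [minor_of_rank_le_one X hrank j k, hjk1, hsym, hjk1]; ring
    have m3 : X i i * X j j = 0 := by
      rw [minor_of_rank_le_one X hrank i j, hij0, hsym, hij0]; ring
    have h0 : (1 : ℝ) = 0 := by
      calc (1 : ℝ) = (X i i * X k k) * (X j j * X k k) := by rw [m1, m2]; ring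
        _ = (X i i * X j j) * (X k k * X k k) := by ring
        _ = 0 := by rw [m3]; ring
    exact one_ne_zero h0
  intro hcl
  exact hLnot (hcl.mem_of_tendsto hstend
    (Filter.Eventually.of_forall fun m => ⟨Y (t m), hYmem (t m), rfl⟩))
end

section
/- Suppose G has no loops and contains a path of length 3 that does not close into a 4-cycle: there are distinct vertices v1, v2, v3, v4 with v1v2 ∈ E, v2v3 ∈ E, v3v4 ∈ E and v1v4 ∉ E. Then P(S^n_{1+}) is not closed. -/
open Matrix

/-- Quadratic form evaluation for PSD matrices at a combination of two basis vectors. -/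
lemma quadPSD {n : ℕ} {X : Matrix (Fin n) (Fin n) ℝ} (hX : X.PosSemidef)
    (a b : Fin n) (t : ℝ) :
    0 ≤ X a a + t * X a b + t * X b a + t * t * X b b := by
  have h := hX.dotProduct_mulVec_nonneg (Pi.single a (1:ℝ) + Pi.single b t)
  simp only [star_trivial, Matrix.mulVec_add, Matrix.mulVec_single,
    dotProduct_add, add_dotProduct, single_dotProduct,
    Pi.smul_apply, Matrix.col_apply, op_smul_eq_mul, mul_one, one_mul] at h
  nlinarith [h]

/-- If a PSD matrix has an entry equal to 1 (in both symmetric positions),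
then the corresponding diagonal entry is nonzero. -/
lemma diag_ne_zero_of_entry {n : ℕ} {X : Matrix (Fin n) (Fin n) ℝ} (hX : X.PosSemidef)
    (a b : Fin n) (hab : X a b = 1) (hba : X b a = 1) : X b b ≠ 0 := by
  intro h0
  have h := quadPSD hX a b (-(X a a + 1) / 2)
  rw [hab, hba, h0] at h
  nlinarith [h]

section aux

variable {n : ℕ} (v1 v2 v3 v4 : Fin n)

/-- limit vector profile -/
def fvAux : Fin n → ℝ := fun v => if v = v1 ∨ v = v2 ∨ v = v3 ∨ v = v4 then 1 else 0

/-- approximating vectors -/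
noncomputable def gvAux (k : ℕ) : Fin n → ℝ := fun v =>
  if v = v1 ∨ v = v4 then (k : ℝ) + 1
  else if v = v2 ∨ v = v3 then ((k : ℝ) + 1)⁻¹ else 0

/-- the target point of the closure -/
noncomputable def yAux (E : Set (Fin n × Fin n)) : E → ℝ := fun p =>
  if (p.1.1 = v2 ∧ p.1.2 = v3) ∨ (p.1.1 = v3 ∧ p.1.2 = v2) then 0
  else fvAux v1 v2 v3 v4 p.1.1 * fvAux v1 v2 v3 v4 p.1.2

end aux

/-- If `G` has no loops and contains a path of length 3 that
does not close into a 4-cycle, then `P(Sⁿ₁₊)` is not closed. -/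
theorem stmt9 (n : ℕ) (hn : 2 ≤ n) (E : Set (Fin n × Fin n))
    (hup : ∀ p ∈ E, p.1 ≤ p.2)
    (hloop : ∀ v : Fin n, (v, v) ∉ E)
    (v1 v2 v3 v4 : Fin n)
    (h12 : v1 ≠ v2) (h13 : v1 ≠ v3) (h14 : v1 ≠ v4)
    (h23 : v2 ≠ v3) (h24 : v2 ≠ v4) (h34 : v3 ≠ v4)
    (e1 : (v1, v2) ∈ E ∨ (v2, v1) ∈ E)
    (e2 : (v2, v3) ∈ E ∨ (v3, v2) ∈ E)
    (e3 : (v3, v4) ∈ E ∨ (v4, v3) ∈ E)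
    (e4 : (v1, v4) ∉ E ∧ (v4, v1) ∉ E) :
    ¬ IsClosed (proj E '' psdRank (Fin n) 1) := by
  classical
  intro hcl
  set g : ℕ → Fin n → ℝ := gvAux v1 v2 v3 v4 with hgdef
  set y : E → ℝ := yAux v1 v2 v3 v4 E with hydef
  set M : ℕ → Matrix (Fin n) (Fin n) ℝ := fun k => vecMulVec (g k) (g k) with hMdef
  have hMmem : ∀ k, M k ∈ psdRank (Fin n) 1 := by
    intro k
    constructor
    · have heq : M k = replicateCol (Fin 1) (g k) * (replicateCol (Fin 1) (g k))ᴴ := by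
        rw [conjTranspose_replicateCol]
        simp only [star_trivial]
        exact vecMulVec_eq (Fin 1) (g k) (g k)
      rw [heq]
      exact posSemidef_self_mul_conjTranspose _
    · have heq : M k = replicateCol (Fin 1) (g k) * replicateRow (Fin 1) (g k) := vecMulVec_eq (Fin 1) (g k) (g k)
      rw [heq]
      calc (replicateCol (Fin 1) (g k) * replicateRow (Fin 1) (g k)).rank
          ≤ (replicateCol (Fin 1) (g k)).rank := rank_mul_le_left _ _
        _ ≤ Fintype.card (Fin 1) := rank_le_card_width _
        _ = 1 := by simp
  have hknz : ∀ k : ℕ, ((k : ℝ) + 1) ≠ 0 := fun k => by positivity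
  -- convergence
  have htend : Filter.Tendsto (fun k => proj E (M k)) Filter.atTop (nhds y) := by
    rw [tendsto_pi_nhds]
    rintro ⟨⟨a, b⟩, hp⟩
    have hab : a ≠ b := by rintro rfl; exact hloop a hp
    have hval : (fun k => proj E (M k) ⟨(a, b), hp⟩) = fun k => g k a * g k b := rfl
    rw [hval]
    by_cases haA : a = v1 ∨ a = v4
    · have hga : ∀ k, g k a = (k : ℝ) + 1 := fun k => if_pos haA
      by_cases hbA : b = v1 ∨ b = v4
      · exfalso
        rcases haA with rfl | rfl <;> rcases hbA with rfl | rfl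
        · exact hab rfl
        · exact e4.1 hp
        · exact e4.2 hp
        · exact hab rfl
      · by_cases hbB : b = v2 ∨ b = v3
        · have hgb : ∀ k, g k b = ((k : ℝ) + 1)⁻¹ := fun k => by
            show (if _ then _ else _) = _
            rw [if_neg hbA, if_pos hbB]
          have hyval : y ⟨(a, b), hp⟩ = 1 := by
            rw [hydef]; simp only [yAux]
            have hcond : ¬ ((a = v2 ∧ b = v3) ∨ (a = v3 ∧ b = v2)) := by
              rintro (⟨rfl, rfl⟩ | ⟨rfl, rfl⟩) <;> rcases haA with h | h <;> simp_all
            rw [if_neg hcond]; simp only [fvAux]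
            rcases haA with rfl | rfl <;> rcases hbB with rfl | rfl <;> simp
          rw [hyval]
          have heq : (fun k => g k a * g k b) = fun _ => (1 : ℝ) := by
            funext k
            rw [hga, hgb, mul_inv_cancel₀ (hknz k)]
          rw [heq]
          exact tendsto_const_nhds
        · -- b outside: product is 0, target 0
          have hgb : ∀ k, g k b = 0 := fun k => by
            show (if _ then _ else _) = _
            rw [if_neg hbA, if_neg hbB]
          have hyval : y ⟨(a, b), hp⟩ = 0 := by
            rw [hydef]; simp only [yAux]
            have hcond : ¬ ((a = v2 ∧ b = v3) ∨ (a = v3 ∧ b = v2)) := by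
              rintro (⟨rfl, rfl⟩ | ⟨rfl, rfl⟩) <;> exact hbB (by simp)
            rw [if_neg hcond]; simp only [fvAux]
            have hfb : (if b = v1 ∨ b = v2 ∨ b = v3 ∨ b = v4 then (1:ℝ) else 0) = 0 := by
              rw [if_neg]
              rintro (h | h | h | h)
              · exact hbA (Or.inl h)
              · exact hbB (Or.inl h)
              · exact hbB (Or.inr h)
              · exact hbA (Or.inr h)
            rw [hfb, mul_zero]
          rw [hyval]
          have heq : (fun k => g k a * g k b) = fun _ => (0 : ℝ) := by
            funext k; rw [hgb, mul_zero]
          rw [heq]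
          exact tendsto_const_nhds
    · by_cases haB : a = v2 ∨ a = v3
      · have hga : ∀ k, g k a = ((k : ℝ) + 1)⁻¹ := fun k => by
          show (if _ then _ else _) = _
          rw [if_neg haA, if_pos haB]
        by_cases hbA : b = v1 ∨ b = v4
        · have hgb : ∀ k, g k b = (k : ℝ) + 1 := fun k => if_pos hbA
          have hyval : y ⟨(a, b), hp⟩ = 1 := by
            rw [hydef]; simp only [yAux]
            have hcond : ¬ ((a = v2 ∧ b = v3) ∨ (a = v3 ∧ b = v2)) := by
              rintro (⟨rfl, rfl⟩ | ⟨rfl, rfl⟩) <;> rcases hbA with h | h <;> simp_all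
            rw [if_neg hcond]; simp only [fvAux]
            rcases haB with rfl | rfl <;> rcases hbA with rfl | rfl <;> simp
          rw [hyval]
          have heq : (fun k => g k a * g k b) = fun _ => (1 : ℝ) := by
            funext k
            rw [hga, hgb, inv_mul_cancel₀ (hknz k)]
          rw [heq]
          exact tendsto_const_nhds
        · by_cases hbB : b = v2 ∨ b = v3
          · -- the crucial edge {v2, v3}: product (k+1)⁻² → 0
            have hgb : ∀ k, g k b = ((k : ℝ) + 1)⁻¹ := fun k => by
              show (if _ then _ else _) = _
              rw [if_neg hbA, if_pos hbB]
            have hyval : y ⟨(a, b), hp⟩ = 0 := by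
              rw [hydef]; simp only [yAux]
              have hcond : (a = v2 ∧ b = v3) ∨ (a = v3 ∧ b = v2) := by
                rcases haB with h2 | h3 <;> rcases hbB with k2 | k3
                · exact absurd (h2.trans k2.symm) hab
                · exact Or.inl ⟨h2, k3⟩
                · exact Or.inr ⟨h3, k2⟩
                · exact absurd (h3.trans k3.symm) hab
              rw [if_pos hcond]
            rw [hyval]
            have heq : (fun k => g k a * g k b) =
                fun k : ℕ => (1 / ((k : ℝ) + 1)) * (1 / ((k : ℝ) + 1)) := by
              funext k; rw [hga, hgb, one_div]
            rw [heq]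
            have h0 : (0 : ℝ) = 0 * 0 := by ring
            rw [h0]
            exact tendsto_one_div_add_atTop_nhds_zero_nat.mul
              tendsto_one_div_add_atTop_nhds_zero_nat
          · have hgb : ∀ k, g k b = 0 := fun k => by
              show (if _ then _ else _) = _
              rw [if_neg hbA, if_neg hbB]
            have hyval : y ⟨(a, b), hp⟩ = 0 := by
              rw [hydef]; simp only [yAux]
              have hcond : ¬ ((a = v2 ∧ b = v3) ∨ (a = v3 ∧ b = v2)) := by
                rintro (⟨rfl, rfl⟩ | ⟨rfl, rfl⟩) <;> exact hbB (by simp)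
              rw [if_neg hcond]; simp only [fvAux]
              have hfb : (if b = v1 ∨ b = v2 ∨ b = v3 ∨ b = v4 then (1:ℝ) else 0) = 0 := by
                rw [if_neg]
                rintro (h | h | h | h)
                · exact hbA (Or.inl h)
                · exact hbB (Or.inl h)
                · exact hbB (Or.inr h)
                · exact hbA (Or.inr h)
              rw [hfb, mul_zero]
            rw [hyval]
            have heq : (fun k => g k a * g k b) = fun _ => (0 : ℝ) := by
              funext k; rw [hgb, mul_zero]
            rw [heq]
            exact tendsto_const_nhds
      · -- a outside: product 0, target 0
        have hga : ∀ k, g k a = 0 := fun k => by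
          show (if _ then _ else _) = _
          rw [if_neg haA, if_neg haB]
        have hyval : y ⟨(a, b), hp⟩ = 0 := by
          rw [hydef]; simp only [yAux]
          have hcond : ¬ ((a = v2 ∧ b = v3) ∨ (a = v3 ∧ b = v2)) := by
            rintro (⟨rfl, rfl⟩ | ⟨rfl, rfl⟩) <;> exact haB (by simp)
          rw [if_neg hcond]; simp only [fvAux]
          have hfa : (if a = v1 ∨ a = v2 ∨ a = v3 ∨ a = v4 then (1:ℝ) else 0) = 0 := by
            rw [if_neg]
            rintro (h | h | h | h)
            · exact haA (Or.inl h)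
            · exact haB (Or.inl h)
            · exact haB (Or.inr h)
            · exact haA (Or.inr h)
          rw [hfa, zero_mul]
        rw [hyval]
        have heq : (fun k => g k a * g k b) = fun _ => (0 : ℝ) := by
          funext k; rw [hga, zero_mul]
        rw [heq]
        exact tendsto_const_nhds
  -- y is in the (closed) image
  have hy_mem : y ∈ proj E '' psdRank (Fin n) 1 :=
    hcl.mem_of_tendsto htend (Filter.Eventually.of_forall fun k => ⟨M k, hMmem k, rfl⟩)
  obtain ⟨X, ⟨hXpsd, hXrank⟩, hXproj⟩ := hy_mem
  -- symmetry of X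
  have hsymm : ∀ i j, X i j = X j i := by
    intro i j
    have := congrFun (congrFun hXpsd.1 i) j
    simpa using this.symm
  -- extract entries
  have hyval12 : ∀ (hp : (v1, v2) ∈ E ∨ (v2, v1) ∈ E), X v1 v2 = 1 := by
    intro hp
    rcases hp with hp | hp
    · have := congrFun hXproj ⟨(v1, v2), hp⟩
      rw [hydef] at this; simp only [yAux] at this
      simp only [proj] at this
      rw [if_neg (by rintro (⟨rfl, _⟩ | ⟨rfl, _⟩) <;> simp_all)] at this
      rw [this]
      simp [fvAux]
    · have := congrFun hXproj ⟨(v2, v1), hp⟩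
      rw [hydef] at this; simp only [yAux] at this
      simp only [proj] at this
      rw [if_neg (by rintro (⟨_, rfl⟩ | ⟨_, rfl⟩) <;> simp_all)] at this
      rw [hsymm v1 v2, this]
      simp [fvAux]
  have hX12 : X v1 v2 = 1 := hyval12 e1
  have hX34 : X v3 v4 = 1 := by
    rcases e3 with hp | hp
    · have := congrFun hXproj ⟨(v3, v4), hp⟩
      rw [hydef] at this; simp only [yAux] at this
      simp only [proj] at this
      rw [if_neg (by rintro (⟨rfl, _⟩ | ⟨_, rfl⟩) <;> simp_all)] at this
      rw [this]
      simp [fvAux]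
    · have := congrFun hXproj ⟨(v4, v3), hp⟩
      rw [hydef] at this; simp only [yAux] at this
      simp only [proj] at this
      rw [if_neg (by rintro (⟨rfl, _⟩ | ⟨_, rfl⟩) <;> simp_all)] at this
      rw [hsymm v3 v4, this]
      simp [fvAux]
  have hX23 : X v2 v3 = 0 := by
    rcases e2 with hp | hp
    · have := congrFun hXproj ⟨(v2, v3), hp⟩
      rw [hydef] at this; simp only [yAux] at this
      simp only [proj] at this
      simpa using this
    · have := congrFun hXproj ⟨(v3, v2), hp⟩
      rw [hydef] at this; simp only [yAux] at this
      simp only [proj] at this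
      rw [hsymm v2 v3]
      simpa using this
  -- diagonal entries nonzero
  have hX22 : X v2 v2 ≠ 0 :=
    diag_ne_zero_of_entry hXpsd v1 v2 hX12 ((hsymm v2 v1).trans hX12)
  have hX33 : X v3 v3 ≠ 0 :=
    diag_ne_zero_of_entry hXpsd v4 v3 ((hsymm v4 v3).trans hX34) hX34
  -- rows v2 and v3 are linearly independent, so rank ≥ 2
  have hli : LinearIndependent ℝ ![X v2, X v3] := by
    rw [LinearIndependent.pair_iff]
    intro s t hst
    have h2 := congrFun hst v2
    have h3 := congrFun hst v3
    simp only [Pi.add_apply, Pi.smul_apply, Pi.zero_apply, smul_eq_mul] at h2 h3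
    rw [hsymm v3 v2, hX23] at h2
    rw [hX23] at h3
    constructor
    · have : s * X v2 v2 = 0 := by linarith
      exact (mul_eq_zero.mp this).resolve_right hX22
    · have : t * X v3 v3 = 0 := by linarith
      exact (mul_eq_zero.mp this).resolve_right hX33
  have hrank2 : 2 ≤ X.rank := by
    have hspan : Submodule.span ℝ (Set.range ![X v2, X v3]) ≤
        Submodule.span ℝ (Set.range X) := by
      apply Submodule.span_mono
      rintro _ ⟨i, rfl⟩
      fin_cases i
      · exact ⟨v2, rfl⟩
      · exact ⟨v3, rfl⟩
    have h2 : Module.finrank ℝ (Submodule.span ℝ (Set.range ![X v2, X v3])) = 2 := by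
      rw [finrank_span_eq_card hli]
      simp
    rw [X.rank_eq_finrank_span_row, ← h2]
    exact Submodule.finrank_mono hspan
  omega
end

section
/- Let G be a connected loopless graph on n ≥ 2 vertices. If P(S^n_{1+}) is closed, then G is a complete bipartite graph. -/
open Matrix

/-- A matrix of rank at most one factors as an outer product. -/
lemma factor_of_rank_le_one {m : ℕ} (X : Matrix (Fin m) (Fin m) ℝ) (h : X.rank ≤ 1) :
    ∃ u w : Fin m → ℝ, ∀ i j, X i j = u i * w j := by
  have h' : Module.finrank ℝ (LinearMap.range X.mulVecLin) ≤ 1 := h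
  have hp : (LinearMap.range X.mulVecLin).IsPrincipal :=
    (Submodule.finrank_le_one_iff_isPrincipal _).mp h'
  obtain ⟨a, ha⟩ := hp.1
  have hcol : ∀ j : Fin m, ∃ r : ℝ, r • a = X.mulVec (Pi.single j 1) := by
    intro j
    have hmem : X.mulVec (Pi.single j 1) ∈ LinearMap.range X.mulVecLin :=
      ⟨Pi.single j 1, rfl⟩
    rw [ha] at hmem
    exact Submodule.mem_span_singleton.mp hmem
  choose c hc using hcol
  refine ⟨a, c, fun i j => ?_⟩
  have h2 := congrFun (hc j) i
  simp only [Pi.smul_apply, smul_eq_mul, Matrix.mulVec_single_one, Matrix.col_apply] at h2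
  rw [← h2]; ring

/-- Outer products of a vector with itself lie in `psdRank _ 1`. -/
lemma outer_mem_psdRank {m : ℕ} (v : Fin m → ℝ) :
    vecMulVec v v ∈ psdRank (Fin m) 1 := by
  constructor
  · have h := Matrix.posSemidef_conjTranspose_mul_self (Matrix.replicateRow (Fin 1) v)
    rw [Matrix.conjTranspose_replicateRow] at h
    have hsv : star v = v := by funext i; simp
    rw [hsv] at h
    rwa [Matrix.vecMulVec_eq (Fin 1)]
  · rw [Matrix.vecMulVec_eq (Fin 1)]
    calc (Matrix.replicateCol (Fin 1) v * Matrix.replicateRow (Fin 1) v).rank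
        ≤ (Matrix.replicateCol (Fin 1) v).rank := Matrix.rank_mul_le_left _ _
      _ ≤ Fintype.card (Fin 1) := Matrix.rank_le_card_width _
      _ = 1 := by simp

/-- From closedness, any "exponent" pattern with nonnegative sums along edges gives a
rank-one PSD matrix realizing the limit pattern. -/
lemma exists_limit_matrix {n : ℕ} (E : Set (Fin n × Fin n))
    (hclosed : IsClosed (proj E '' psdRank (Fin n) 1))
    (f : Fin n → ℤ) (hf : ∀ p ∈ E, 0 ≤ f p.1 + f p.2) :
    ∃ X : Matrix (Fin n) (Fin n) ℝ, X.PosSemidef ∧ X.rank ≤ 1 ∧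
      ∀ p ∈ E, X p.1 p.2 = if f p.1 + f p.2 = 0 then 1 else 0 := by
  have hhalf : ∀ k : ℕ, ((1:ℝ)/2)^k ≠ 0 := fun k => pow_ne_zero k (by norm_num)
  set xk : ℕ → Fin n → ℝ := fun k v => (((1:ℝ)/2)^k) ^ (f v) with hxk
  set y : E → ℝ := fun p => if f p.1.1 + f p.1.2 = 0 then 1 else 0 with hy
  have htend : Filter.Tendsto (fun k => proj E (vecMulVec (xk k) (xk k)))
      Filter.atTop (nhds y) := by
    rw [tendsto_pi_nhds]
    intro p
    have hcoord : ∀ k, proj E (vecMulVec (xk k) (xk k)) p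
        = (((1:ℝ)/2)^k) ^ (f p.1.1 + f p.1.2) := by
      intro k
      simp only [proj, Matrix.vecMulVec_apply, hxk]
      rw [← zpow_add₀ (hhalf k)]
    simp only [hcoord]
    rcases eq_or_lt_of_le (hf p.1 p.2) with h0 | hpos
    · have hyp : y p = 1 := by simp [hy, ← h0]
      rw [hyp]
      have hconst : ∀ k : ℕ, (((1:ℝ)/2)^k) ^ (f p.1.1 + f p.1.2) = 1 := by
        intro k; rw [← h0, zpow_zero]
      simp only [hconst]
      exact tendsto_const_nhds
    · have hne : f p.1.1 + f p.1.2 ≠ 0 := by omega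
      have hyp : y p = 0 := by simp [hy, hne]
      rw [hyp]
      set m := (f p.1.1 + f p.1.2).toNat with hm
      have hmpos : m ≠ 0 := by omega
      have h1 : ∀ k : ℕ, (((1:ℝ)/2)^k) ^ (f p.1.1 + f p.1.2) = (((1:ℝ)/2)^m)^k := by
        intro k
        have hcast : f p.1.1 + f p.1.2 = (m : ℤ) := by omega
        rw [hcast, zpow_natCast, ← pow_mul, mul_comm, pow_mul]
      simp only [h1]
      exact tendsto_pow_atTop_nhds_zero_of_lt_one (by positivity)
        (pow_lt_one₀ (by norm_num) (by norm_num) hmpos)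
  have hmem : y ∈ proj E '' psdRank (Fin n) 1 :=
    hclosed.mem_of_tendsto htend
      (Filter.Eventually.of_forall fun k => ⟨_, outer_mem_psdRank _, rfl⟩)
  obtain ⟨X, hX, hXy⟩ := hmem
  refine ⟨X, hX.1, hX.2, fun p hp => ?_⟩
  have h2 := congrFun hXy ⟨p, hp⟩
  simpa [proj, hy] using h2

section Gadgets

variable {n : ℕ} {E : Set (Fin n × Fin n)}

/-- Path-closure gadget: a path `v0-v1-v2-v3` with suitably distinct vertices must close up. -/
lemma key1 (hloop : ∀ v : Fin n, (v, v) ∉ E)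
    (hclosed : IsClosed (proj E '' psdRank (Fin n) 1))
    (v0 v1 v2 v3 : Fin n)
    (h01 : (graphOf E).Adj v0 v1) (h12 : (graphOf E).Adj v1 v2)
    (h23 : (graphOf E).Adj v2 v3)
    (h02 : v0 ≠ v2) (h13 : v1 ≠ v3) (h03 : v0 ≠ v3) :
    (graphOf E).Adj v0 v3 := by
  by_contra hadj
  classical
  set f : Fin n → ℤ := fun v =>
    if v = v0 ∨ v = v3 then -1 else if v = v1 ∨ v = v2 then 1 else 3 with hfdef
  have hfend : ∀ v, (v = v0 ∨ v = v3) → f v = -1 := by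
    intro v hv; simp only [hfdef, if_pos hv]
  have hflb1 : ∀ v, ¬(v = v0 ∨ v = v3) → 1 ≤ f v := by
    intro v hv
    simp only [hfdef, if_neg hv]
    split <;> norm_num
  have hf : ∀ p ∈ E, 0 ≤ f p.1 + f p.2 := by
    rintro ⟨p1, p2⟩ hp
    show 0 ≤ f p1 + f p2
    have hne : p1 ≠ p2 := fun h => hloop p1 (h ▸ hp)
    by_cases hA : p1 = v0 ∨ p1 = v3 <;> by_cases hB : p2 = v0 ∨ p2 = v3
    · exfalso
      apply hadj
      rcases hA with h1 | h1 <;> rcases hB with h2 | h2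
      · exact absurd (h1.trans h2.symm) hne
      · refine ⟨h03, Or.inl ?_⟩
        rw [← h1, ← h2]; exact hp
      · refine ⟨h03, Or.inr ?_⟩
        rw [← h2, ← h1]; exact hp
      · exact absurd (h1.trans h2.symm) hne
    · have ha := hfend p1 hA
      have hb := hflb1 p2 hB
      omega
    · have ha := hflb1 p1 hA
      have hb := hfend p2 hB
      omega
    · have ha := hflb1 p1 hA
      have hb := hflb1 p2 hB
      omega
  obtain ⟨X, hpsd, hrank, hXE⟩ := exists_limit_matrix E hclosed f hf
  have hsym : ∀ i j, X i j = X j i := by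
    intro i j
    have h := hpsd.1.apply i j
    rw [star_trivial] at h
    exact h.symm
  have hval : ∀ a b : Fin n, (graphOf E).Adj a b →
      X a b = if f a + f b = 0 then 1 else 0 := by
    intro a b hab
    rcases hab.2 with h | h
    · exact hXE (a, b) h
    · rw [hsym a b]
      have h2 := hXE (b, a) h
      rw [h2, add_comm (f b) (f a)]
  have hfv0 : f v0 = -1 := hfend v0 (Or.inl rfl)
  have hfv3 : f v3 = -1 := hfend v3 (Or.inr rfl)
  have hnv1 : ¬(v1 = v0 ∨ v1 = v3) := by
    rintro (h | h)
    · exact h01.1 h.symm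
    · exact h13 h
  have hnv2 : ¬(v2 = v0 ∨ v2 = v3) := by
    rintro (h | h)
    · exact h02 h.symm
    · exact h23.1 h
  have hfv1 : f v1 = 1 := by
    simp only [hfdef, if_neg hnv1]
    norm_num
  have hfv2 : f v2 = 1 := by
    simp only [hfdef, if_neg hnv2]
    norm_num
  have e01 : X v0 v1 = 1 := by rw [hval v0 v1 h01, hfv0, hfv1]; norm_num
  have e23 : X v2 v3 = 1 := by rw [hval v2 v3 h23, hfv2, hfv3]; norm_num
  have e21 : X v2 v1 = 0 := by rw [hval v2 v1 h12.symm, hfv2, hfv1]; norm_num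
  obtain ⟨u, w, huw⟩ := factor_of_rank_le_one X hrank
  have hcontra : (1:ℝ) = 0 := by
    calc (1:ℝ) = X v0 v1 * X v2 v3 := by rw [e01, e23]; ring
      _ = (u v0 * w v1) * (u v2 * w v3) := by rw [huw, huw]
      _ = (u v0 * w v3) * (u v2 * w v1) := by ring
      _ = X v0 v3 * X v2 v1 := by rw [huw, huw]
      _ = 0 := by rw [e21, mul_zero]
  exact one_ne_zero hcontra

/-- Triangle-freeness gadget. -/
lemma key2 (hloop : ∀ v : Fin n, (v, v) ∉ E)
    (hclosed : IsClosed (proj E '' psdRank (Fin n) 1))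
    (a b c : Fin n)
    (hab : (graphOf E).Adj a b) (hbc : (graphOf E).Adj b c)
    (hac : (graphOf E).Adj a c) : False := by
  classical
  set f : Fin n → ℤ := fun v => if v = b then -1 else if v = a ∨ v = c then 1 else 3 with hfdef
  have hflb1 : ∀ v, v ≠ b → 1 ≤ f v := by
    intro v hv
    simp only [hfdef, if_neg hv]
    split <;> norm_num
  have hfb : f b = -1 := by simp [hfdef]
  have hf : ∀ p ∈ E, 0 ≤ f p.1 + f p.2 := by
    rintro ⟨p1, p2⟩ hp
    show 0 ≤ f p1 + f p2
    have hne : p1 ≠ p2 := fun h => hloop p1 (h ▸ hp)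
    by_cases h1 : p1 = b <;> by_cases h2 : p2 = b
    · exact absurd (h1.trans h2.symm) hne
    · have ha : f p1 = -1 := by rw [h1, hfb]
      have hb := hflb1 p2 h2
      omega
    · have ha := hflb1 p1 h1
      have hb : f p2 = -1 := by rw [h2, hfb]
      omega
    · have ha := hflb1 p1 h1
      have hb := hflb1 p2 h2
      omega
  obtain ⟨X, hpsd, hrank, hXE⟩ := exists_limit_matrix E hclosed f hf
  have hsym : ∀ i j, X i j = X j i := by
    intro i j
    have h := hpsd.1.apply i j
    rw [star_trivial] at h
    exact h.symm
  have hval : ∀ x y : Fin n, (graphOf E).Adj x y →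
      X x y = if f x + f y = 0 then 1 else 0 := by
    intro x y hxy
    rcases hxy.2 with h | h
    · exact hXE (x, y) h
    · rw [hsym x y]
      have h2 := hXE (y, x) h
      rw [h2, add_comm (f y) (f x)]
  have hfa : f a = 1 := by
    simp only [hfdef, if_neg hab.1]
    norm_num
  have hfc : f c = 1 := by
    simp only [hfdef, if_neg (Ne.symm hbc.1)]
    norm_num
  have eab : X a b = 1 := by rw [hval a b hab, hfa, hfb]; norm_num
  have ebc : X b c = 1 := by rw [hval b c hbc, hfb, hfc]; norm_num
  have eac : X a c = 0 := by rw [hval a c hac, hfa, hfc]; norm_num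
  obtain ⟨u, w, huw⟩ := factor_of_rank_le_one X hrank
  have hcontra : (1:ℝ) = 0 := by
    calc (1:ℝ) = X a b * X b c := by rw [eab, ebc]; ring
      _ = (u a * w b) * (u b * w c) := by rw [huw, huw]
      _ = (u a * w c) * (u b * w b) := by ring
      _ = X a c * X b b := by rw [huw, huw]
      _ = 0 := by rw [eac, zero_mul]
  exact one_ne_zero hcontra

end Gadgets

/-- If `G` is a connected loopless graph on `n ≥ 2` vertices
and `P(Sⁿ₁₊)` is closed, then `G` is complete bipartite. -/
theorem stmt11 (n : ℕ) (hn : 2 ≤ n) (E : Set (Fin n × Fin n))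
    (hup : ∀ p ∈ E, p.1 ≤ p.2)
    (hloop : ∀ v : Fin n, (v, v) ∉ E)
    (hconn : (graphOf E).Connected)
    (hclosed : IsClosed (proj E '' psdRank (Fin n) 1)) :
    ∃ V1 V2 : Set (Fin n), V1.Nonempty ∧ V2.Nonempty ∧ (∀ v, v ∈ V1 ↔ v ∉ V2) ∧
      ∀ i j : Fin n, ((i, j) ∈ E ∨ (j, i) ∈ E) ↔
        ((i ∈ V1 ∧ j ∈ V2) ∨ (i ∈ V2 ∧ j ∈ V1)) := by
  set G := graphOf E with hG
  have hE_adj : ∀ i j : Fin n, ((i, j) ∈ E ∨ (j, i) ∈ E) ↔ G.Adj i j := by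
    intro i j
    constructor
    · intro h
      refine ⟨?_, h⟩
      rintro rfl
      rcases h with h | h <;> exact hloop i h
    · exact fun h => h.2
  set r : Fin n := ⟨0, by omega⟩ with hr
  have hgen : ∀ (a b : Fin n) (p : G.Walk a b), a ≠ b → ∃ s, G.Adj a s := by
    intro a b p
    cases p with
    | nil => exact fun h => absurd rfl h
    | cons h q => exact fun _ => ⟨_, h⟩
  have hr2 : ∃ s, G.Adj r s := by
    have hv : r ≠ (⟨1, by omega⟩ : Fin n) := by simp [hr, Fin.ext_iff]
    exact (hconn.preconnected r ⟨1, by omega⟩).elim fun p => hgen _ _ p hv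
  obtain ⟨s, hs⟩ := hr2
  set T : Fin n → Prop := fun v => G.Adj r v ∨ ∀ w, G.Adj r w → G.Adj v w with hT
  have hstep : ∀ a c : Fin n, T a → G.Adj a c → T c := by
    intro a c ha hac
    by_cases hrc : G.Adj r c
    · exact Or.inl hrc
    · right
      intro w hrw
      rcases ha with h1 | h2
      · by_cases hcr : c = r
        · subst hcr; exact hrw
        · by_cases hwa : w = a
          · subst hwa; exact hac.symm
          · refine key1 hloop hclosed c a r w hac.symm h1.symm hrw hcr
              (fun h => hwa h.symm) (fun h => hrc (by rw [h]; exact hrw))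
      · by_cases har : a = r
        · subst har; exact absurd hac hrc
        · have hra : ¬ G.Adj r a := fun h => G.loopless.irrefl a (h2 a h)
          have hcr : c ≠ r := fun h => hra (by rw [← h]; exact hac.symm)
          have hcw : c ≠ w := fun h => hrc (by rw [h]; exact hrw)
          exact absurd (key1 hloop hclosed c a w r hac.symm (h2 w hrw) hrw.symm
            hcw (fun h => har h) hcr).symm hrc
  have hwalk : ∀ (a b : Fin n) (p : G.Walk a b), T a → T b := by
    intro a b p
    induction p with
    | nil => exact id
    | cons h q ih => exact fun ha => ih (hstep _ _ ha h)
  have hTall : ∀ v, T v := by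
    intro v
    exact (hconn.preconnected r v).elim fun p => hwalk r v p (Or.inr fun w hw => hw)
  refine ⟨{v | G.Adj r v}, {v | ¬ G.Adj r v}, ⟨s, hs⟩, ⟨r, G.loopless.irrefl r⟩,
    fun v => not_not.symm, ?_⟩
  intro i j
  rw [hE_adj i j]
  constructor
  · intro hij
    by_cases hi : G.Adj r i <;> by_cases hj : G.Adj r j
    · exact (key2 hloop hclosed r i j hi hij hj).elim
    · exact Or.inl ⟨hi, hj⟩
    · exact Or.inr ⟨hi, hj⟩
    · rcases hTall i with h | h2i
      · exact absurd h hi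
      · rcases hTall j with h | h2j
        · exact absurd h hj
        · exact (key2 hloop hclosed i j s hij (h2j s hs) (h2i s hs)).elim
  · rintro (⟨hi, hj⟩ | ⟨hi, hj⟩)
    · rcases hTall j with h | h2
      · exact absurd h hj
      · exact (h2 i hi).symm
    · rcases hTall i with h | h2
      · exact absurd h hi
      · exact h2 j hj
end

section
/- Suppose G is loopless and complete bipartite: V is the disjoint union of two nonempty sets V1 and V2 and E consists exactly of all pairs with one endpoint in V1 and the other in V2. Then P(S^n_{r+}) is closed for every integer r with 0 ≤ r ≤ n. -/
open Matrix

section RankLemmas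

variable {ι κ α β : Type*} [Fintype ι] [Fintype κ] [DecidableEq ι] [DecidableEq κ]

/-- General submatrix rank bound. -/
lemma aux_rank_submatrix_le [Fintype α] [Fintype β]
    (A : Matrix ι κ ℝ) (f : α → ι) (g : β → κ) :
    (A.submatrix f g).rank ≤ A.rank := by
  have h1 : A.submatrix f g = (A.submatrix f id).submatrix id g := by
    ext i j; simp [Matrix.submatrix_apply]
  have h2 : A.submatrix f id =
      ((1 : Matrix ι ι ℝ).submatrix f (Equiv.refl ι)) * A := by
    rw [Matrix.one_submatrix_mul]
    rfl
  have h3 : (A.submatrix f id).submatrix id g =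
      (A.submatrix f id) * ((1 : Matrix κ κ ℝ).submatrix (Equiv.refl κ) g) := by
    rw [Matrix.mul_submatrix_one]
    rfl
  calc (A.submatrix f g).rank
      = ((A.submatrix f id) * ((1 : Matrix κ κ ℝ).submatrix (Equiv.refl κ) g)).rank := by
        rw [h1, h3]
    _ ≤ (A.submatrix f id).rank := Matrix.rank_mul_le_left _ _
    _ = (((1 : Matrix ι ι ℝ).submatrix f (Equiv.refl ι)) * A).rank := by rw [h2]
    _ ≤ A.rank := Matrix.rank_mul_le_right _ _

/-- From `k ≤ rank A` one can pick `k` rows of `A` that are linearly independent. -/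
lemma exists_indep_rows (A : Matrix ι κ ℝ) (k : ℕ) (hk : k ≤ A.rank) :
    ∃ f : Fin k → ι, LinearIndependent ℝ (fun a => A (f a)) := by
  classical
  have hspan : A.rank = Module.finrank ℝ (Submodule.span ℝ (Set.range A)) :=
    Matrix.rank_eq_finrank_span_row A
  obtain ⟨b, hbsub, hbspan, hbli⟩ := exists_linearIndependent ℝ (Set.range A)
  have hbfin : b.Finite := (Set.finite_range A).subset hbsub
  haveI : Fintype b := hbfin.fintype
  have hcard : k ≤ Fintype.card b := by
    have h1 : Module.finrank ℝ (Submodule.span ℝ b) ≤ b.toFinset.card := by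
      simpa using finrank_span_le_card (R := ℝ) b
    have h2 : k ≤ Module.finrank ℝ (Submodule.span ℝ b) := by
      rw [hbspan]; exact hspan ▸ hk
    calc k ≤ Module.finrank ℝ (Submodule.span ℝ b) := h2
      _ ≤ b.toFinset.card := h1
      _ = Fintype.card b := Set.toFinset_card b
  obtain ⟨e⟩ := Function.Embedding.nonempty_of_card_le
    (by simpa using hcard : Fintype.card (Fin k) ≤ Fintype.card b)
  choose f hf using fun a : Fin k => hbsub (e a).2
  refine ⟨f, ?_⟩
  have : (fun a : Fin k => A (f a)) = (fun x : b => (x : κ → ℝ)) ∘ e := by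
    funext a; exact hf a
  rw [this]
  exact hbli.comp e e.injective

/-- Determinantal characterisation of `rank ≤ r`. -/
lemma rank_le_iff_minors (A : Matrix ι κ ℝ) (r : ℕ) :
    A.rank ≤ r ↔ ∀ (f : Fin (r + 1) → ι) (g : Fin (r + 1) → κ),
      (A.submatrix f g).det = 0 := by
  constructor
  · intro h f g
    by_contra hdet
    have hunit : IsUnit (A.submatrix f g) :=
      (Matrix.isUnit_iff_isUnit_det _).2 (isUnit_iff_ne_zero.2 hdet)
    have := Matrix.rank_of_isUnit _ hunit
    have hle := aux_rank_submatrix_le A f g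
    rw [this] at hle
    simp [Fintype.card_fin] at hle
    omega
  · intro h
    by_contra hrk
    push_neg at hrk
    have hk : r + 1 ≤ A.rank := hrk
    obtain ⟨f, hf⟩ := exists_indep_rows A (r + 1) hk
    set B : Matrix (Fin (r + 1)) κ ℝ := A.submatrix f id with hB
    have hBrows : LinearIndependent ℝ (fun a => B a) := hf
    have hBrank : B.rank = r + 1 := by
      have := hBrows.rank_matrix
      rw [Fintype.card_fin] at this
      exact this
    have hBt : Bᵀ.rank = r + 1 := by rw [Matrix.rank_transpose]; exact hBrank
    obtain ⟨g, hg⟩ := exists_indep_rows Bᵀ (r + 1) hBt.ge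
    set C : Matrix (Fin (r + 1)) (Fin (r + 1)) ℝ := Bᵀ.submatrix g id with hC
    have hCrows : LinearIndependent ℝ (fun a => C a) := hg
    have hCunit : IsUnit C := Matrix.linearIndependent_rows_iff_isUnit.1 hCrows
    have hCdet : C.det ≠ 0 := by
      intro h0
      exact (isUnit_iff_ne_zero.1 ((Matrix.isUnit_iff_isUnit_det _).1 hCunit)) h0
    have hCT : C = (A.submatrix f g)ᵀ := by
      ext a c; simp [hC, hB, Matrix.submatrix_apply, Matrix.transpose_apply]
    rw [hCT, Matrix.det_transpose] at hCdet
    exact hCdet (h f g)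

/-- The set of matrices of rank at most `r` is closed. -/
lemma isClosed_rank_le (r : ℕ) :
    IsClosed {A : Matrix ι κ ℝ | A.rank ≤ r} := by
  have : {A : Matrix ι κ ℝ | A.rank ≤ r} =
      ⋂ (f : Fin (r + 1) → ι) (g : Fin (r + 1) → κ),
        {A : Matrix ι κ ℝ | (A.submatrix f g).det = 0} := by
    ext A
    simp only [Set.mem_setOf_eq, Set.mem_iInter]
    exact rank_le_iff_minors A r
  rw [this]
  refine isClosed_iInter fun f => isClosed_iInter fun g => ?_
  exact isClosed_eq ((continuous_id.matrix_submatrix f g).matrix_det) continuous_const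

/-- Rank factorization. -/
lemma exists_factorization (A : Matrix ι κ ℝ) (r : ℕ) (h : A.rank ≤ r) :
    ∃ (U : Matrix ι (Fin r) ℝ) (W : Matrix (Fin r) κ ℝ), A = U * W := by
  classical
  set V := LinearMap.range A.mulVecLin with hV
  have hd : Module.finrank ℝ V ≤ r := h
  set d := Module.finrank ℝ V with hdd
  let b : Module.Basis (Fin d) ℝ V := Module.finBasis ℝ V
  have hmem : ∀ j : κ, (fun i => A i j) ∈ V := by
    intro j
    refine ⟨Pi.single j 1, ?_⟩
    rw [Matrix.mulVecLin_apply, Matrix.mulVec_single]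
    funext i; simp
  let c : κ → V := fun j => ⟨fun i => A i j, hmem j⟩
  let U : Matrix ι (Fin r) ℝ := fun i k =>
    if hk : (k : ℕ) < d then ((b ⟨k, hk⟩ : V) : ι → ℝ) i else 0
  let W : Matrix (Fin r) κ ℝ := fun k j =>
    if hk : (k : ℕ) < d then b.repr (c j) ⟨k, hk⟩ else 0
  refine ⟨U, W, ?_⟩
  ext i j
  rw [Matrix.mul_apply]
  set g : ℕ → ℝ := fun k =>
    if hk : k < d then ((b ⟨k, hk⟩ : V) : ι → ℝ) i * b.repr (c j) ⟨k, hk⟩ else 0 with hg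
  have hterm : ∀ k : Fin r, U i k * W k j = g k := by
    intro k
    by_cases hk : (k : ℕ) < d
    · simp [U, W, g, hk]
    · simp [U, W, g, hk]
  rw [Finset.sum_congr rfl fun k _ => hterm k]
  have h1 : ∑ k : Fin r, g (k : ℕ) = ∑ k ∈ Finset.range r, g k :=
    Fin.sum_univ_eq_sum_range g r
  rw [h1]
  have h2 : ∑ k ∈ Finset.range r, g k = ∑ k ∈ Finset.range d, g k := by
    refine (Finset.sum_subset (Finset.range_subset_range.2 hd) ?_).symm
    intro k _ hk
    have : ¬ k < d := by simpa using hk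
    simp [g, this]
  rw [h2, ← Fin.sum_univ_eq_sum_range g d]
  have h3 : ∀ k : Fin d, g (k : ℕ) =
      ((b k : V) : ι → ℝ) i * b.repr (c j) k := by
    intro k
    simp [g, k.2]
  rw [Finset.sum_congr rfl fun k _ => h3 k]
  have hsum : (∑ k : Fin d, b.repr (c j) k • (b k : V)) = c j := b.sum_repr (c j)
  have hsum' : (∑ k : Fin d, b.repr (c j) k • ((b k : V) : ι → ℝ)) = ((c j : V) : ι → ℝ) := by
    have := congrArg (Subtype.val) hsum
    simpa only [Submodule.coe_sum, Submodule.coe_smul] using this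
  have := congrFun hsum' i
  simp only [Finset.sum_apply, Pi.smul_apply, smul_eq_mul] at this
  rw [show A i j = ((c j : V) : ι → ℝ) i from rfl, ← this]
  exact Finset.sum_congr rfl fun k _ => (mul_comm _ _)

end RankLemmas

section Main

variable {n : ℕ}

/-- If `G` is loopless and complete bipartite (vertices
partitioned into nonempty parts `V1`, `V2`, and the adjacent pairs are exactly
those with one endpoint in each part), then `P(Sⁿᵣ₊)` is closed for every
`0 ≤ r ≤ n`. -/
theorem stmt12 (n : ℕ) (hn : 2 ≤ n) (E : Set (Fin n × Fin n))
    (hup : ∀ p ∈ E, p.1 ≤ p.2)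
    (hloop : ∀ v : Fin n, (v, v) ∉ E)
    (V1 V2 : Set (Fin n)) (h1 : V1.Nonempty) (h2 : V2.Nonempty)
    (hpart : ∀ v, v ∈ V1 ↔ v ∉ V2)
    (hbip : ∀ i j : Fin n, ((i, j) ∈ E ∨ (j, i) ∈ E) ↔
      ((i ∈ V1 ∧ j ∈ V2) ∨ (i ∈ V2 ∧ j ∈ V1)))
    (r : ℕ) (hr : r ≤ n) :
    IsClosed (proj E '' psdRank (Fin n) r) := by
  classical
  haveI : Fintype ↥V1 := Fintype.ofFinite _
  haveI : Fintype ↥V2 := Fintype.ofFinite _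
  -- basic facts
  have hdisj : ∀ v, v ∈ V1 → v ∉ V2 := fun v h => (hpart v).1 h
  have hnotboth : ∀ a c : Fin n, (a, c) ∈ E → (c, a) ∉ E := by
    intro a c hac hca
    have h1' := hup _ hac
    have h2' := hup _ hca
    have : a = c := le_antisymm h1' h2'
    subst this
    exact hloop a hac
  -- the cross matrix of an `E`-indexed vector
  set mat : (E → ℝ) → Matrix ↥V1 ↥V2 ℝ := fun f i j =>
    if h : ((i : Fin n), (j : Fin n)) ∈ E then f ⟨((i : Fin n), (j : Fin n)), h⟩
    else if h' : ((j : Fin n), (i : Fin n)) ∈ E then f ⟨((j : Fin n), (i : Fin n)), h'⟩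
    else 0 with hmat
  have hkey : proj E '' psdRank (Fin n) r = mat ⁻¹' {A | A.rank ≤ r} := by
    ext f
    constructor
    · rintro ⟨X, ⟨hpsd, hrk⟩, rfl⟩
      have hsym : ∀ a c, X a c = X c a := by
        intro a c
        conv_lhs => rw [← hpsd.1]
        simp [Matrix.conjTranspose_apply]
      have hmm : mat (proj E X) =
          X.submatrix (fun i : ↥V1 => (i : Fin n)) (fun j : ↥V2 => (j : Fin n)) := by
        ext i j
        simp only [hmat]
        by_cases h : ((i : Fin n), (j : Fin n)) ∈ E
        · simp [h, proj]
        · by_cases h' : ((j : Fin n), (i : Fin n)) ∈ E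
          · simp [h, h', proj, hsym (j : Fin n) (i : Fin n)]
          · exfalso
            have := (hbip (i : Fin n) (j : Fin n)).2 (Or.inl ⟨i.2, j.2⟩)
            rcases this with h'' | h'' <;> [exact h h''; exact h' h'']
      simp only [Set.mem_preimage, Set.mem_setOf_eq, hmm]
      exact (aux_rank_submatrix_le X _ _).trans hrk
    · intro hf
      obtain ⟨U, W, hUW⟩ := exists_factorization (mat f) r hf
      set Y : Matrix (Fin r) (Fin n) ℝ := fun k v =>
        if h : v ∈ V1 then U ⟨v, h⟩ k
        else W k ⟨v, not_not.mp (fun hc => h ((hpart v).mpr hc))⟩ with hY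
      refine ⟨Yᵀ * Y, ⟨?_, ?_⟩, ?_⟩
      · have := Matrix.posSemidef_conjTranspose_mul_self Y
        have hct : Yᴴ = Yᵀ := by
          ext a c; simp [Matrix.conjTranspose_apply]
        rwa [hct] at this
      · calc (Yᵀ * Y).rank = Y.rank := Matrix.rank_transpose_mul_self Y
          _ ≤ Fintype.card (Fin r) := Matrix.rank_le_card_height Y
          _ = r := Fintype.card_fin r
      · funext p
        obtain ⟨⟨a, c⟩, hp⟩ := p
        have hac : (a ∈ V1 ∧ c ∈ V2) ∨ (a ∈ V2 ∧ c ∈ V1) :=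
          (hbip a c).1 (Or.inl hp)
        have hXac : (Yᵀ * Y) a c = ∑ k : Fin r, Y k a * Y k c := by
          rw [Matrix.mul_apply]; simp [Matrix.transpose_apply]
        rcases hac with ⟨ha1, hc2⟩ | ⟨ha2, hc1⟩
        · have hcn1 : c ∉ V1 := fun hc => hdisj c hc hc2
          have hYa : ∀ k, Y k a = U ⟨a, ha1⟩ k := fun k => by simp [hY, ha1]
          have hYc : ∀ k, Y k c = W k ⟨c, hc2⟩ := fun k => by simp [hY, hcn1]
          have : (Yᵀ * Y) a c = (U * W) ⟨a, ha1⟩ ⟨c, hc2⟩ := by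
            rw [hXac, Matrix.mul_apply]
            exact Finset.sum_congr rfl fun k _ => by rw [hYa k, hYc k]
          show proj E (Yᵀ * Y) ⟨(a, c), hp⟩ = f ⟨(a, c), hp⟩
          rw [show proj E (Yᵀ * Y) ⟨(a, c), hp⟩ = (Yᵀ * Y) a c from rfl, this,
            ← hUW]
          simp [hmat, hp]
        · have han1 : a ∉ V1 := fun hc => hdisj a hc ha2
          have hYa : ∀ k, Y k a = W k ⟨a, ha2⟩ := fun k => by simp [hY, han1]
          have hYc : ∀ k, Y k c = U ⟨c, hc1⟩ k := fun k => by simp [hY, hc1]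
          have : (Yᵀ * Y) a c = (U * W) ⟨c, hc1⟩ ⟨a, ha2⟩ := by
            rw [hXac, Matrix.mul_apply]
            exact Finset.sum_congr rfl fun k _ => by rw [hYa k, hYc k]; ring
          have hca : (c, a) ∉ E := hnotboth a c hp
          show proj E (Yᵀ * Y) ⟨(a, c), hp⟩ = f ⟨(a, c), hp⟩
          rw [show proj E (Yᵀ * Y) ⟨(a, c), hp⟩ = (Yᵀ * Y) a c from rfl, this,
            ← hUW]
          simp [hmat, hca, hp]
  rw [hkey]
  refine IsClosed.preimage ?_ (isClosed_rank_le r)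
  refine continuous_matrix fun i j => ?_
  simp only [hmat]
  by_cases h : ((i : Fin n), (j : Fin n)) ∈ E
  · simpa [h] using continuous_apply (⟨((i : Fin n), (j : Fin n)), h⟩ : E)
  · by_cases h' : ((j : Fin n), (i : Fin n)) ∈ E
    · simpa [h, h'] using continuous_apply (⟨((j : Fin n), (i : Fin n)), h'⟩ : E)
    · simpa [h, h'] using (continuous_const : Continuous fun _ : E → ℝ => (0:ℝ))

end Main
end

section
/- Let G be a connected loopless graph on n ≥ 2 vertices. Then P(S^n_{1+}) is closed if and only if G is a complete bipartite graph. -/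
open Matrix

lemma mem_psdRank_one_iff {n : ℕ} (X : Matrix (Fin n) (Fin n) ℝ) :
    X ∈ psdRank (Fin n) 1 ↔ ∃ x : Fin n → ℝ, ∀ i j, X i j = x i * x j := by
  constructor
  · rintro ⟨hP, hr⟩
    obtain ⟨v, hv⟩ := finrank_le_one_iff.mp hr
    have hcol : ∀ j, ∃ c : ℝ, ∀ i, X i j = c * (v : Fin n → ℝ) i := by
      intro j
      obtain ⟨c, hc⟩ := hv ⟨X.mulVec (Pi.single j 1), ⟨Pi.single j 1, rfl⟩⟩
      refine ⟨c, fun i => ?_⟩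
      have h2 := congrFun (congrArg Subtype.val hc) i
      simpa [Matrix.mulVec_single] using h2.symm
    choose c hc using hcol
    have hsym : ∀ i j, X i j = X j i := fun i j => by
      simpa using congrFun (congrFun hP.1 j) i
    have hminor : ∀ i j k l, X i j * X k l = X i l * X k j := by
      intro i j k l; rw [hc j, hc l, hc l, hc j]; ring
    have hdiag : ∀ i, 0 ≤ X i i := by
      intro i
      exact hP.diag_nonneg
    by_cases hX : ∀ i j, X i j = 0
    · exact ⟨0, fun i j => by simp [hX i j]⟩
    · push_neg at hX
      obtain ⟨i1, j1, hij⟩ := hX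
      have hd : X j1 j1 ≠ 0 := by
        intro h0
        apply hij
        have h2 := hminor i1 j1 j1 i1
        rw [← hsym i1 j1, h0, mul_zero] at h2
        exact mul_self_eq_zero.mp h2
      have hdpos : 0 < X j1 j1 := lt_of_le_of_ne (hdiag j1) (Ne.symm hd)
      refine ⟨fun i => X i j1 / Real.sqrt (X j1 j1), fun i j => ?_⟩
      have hs : Real.sqrt (X j1 j1) * Real.sqrt (X j1 j1) = X j1 j1 :=
        Real.mul_self_sqrt hdpos.le
      have key : X i j1 * X j j1 = X i j * X j1 j1 := by
        have := hminor i j1 j1 j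
        rw [hsym j1 j] at this
        linarith [this]
      field_simp
      rw [Real.sq_sqrt hdpos.le]
      linarith [key]
  · rintro ⟨x, hx⟩
    have hXeq : X = Matrix.vecMulVec x x := by
      ext i j; simp [Matrix.vecMulVec, hx i j]
    constructor
    · refine Matrix.posSemidef_iff_dotProduct_mulVec.mpr ⟨?_, ?_⟩
      · ext i j
        simp [hXeq, Matrix.vecMulVec, mul_comm]
      · intro y
        have : star y ⬝ᵥ X *ᵥ y = (∑ i, x i * y i) * (∑ i, x i * y i) := by
          rw [Finset.sum_mul_sum]
          simp only [hXeq, star_trivial, dotProduct, Matrix.mulVec,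
            Matrix.vecMulVec_apply, Finset.mul_sum]
          exact Finset.sum_congr rfl fun i _ => Finset.sum_congr rfl fun j _ => by ring
        rw [this]
        exact mul_self_nonneg _
    · rw [hXeq, Matrix.vecMulVec_eq (Fin 1)]
      exact le_trans (Matrix.rank_mul_le_left _ _)
        (le_trans (Matrix.rank_le_card_width _) (by simp))

def pattSet {n : ℕ} (E : Set (Fin n × Fin n)) : Set (E → ℝ) :=
  {f | ∃ x : Fin n → ℝ, ∀ p : E, f p = x p.1.1 * x p.1.2}

lemma image_eq {n : ℕ} (E : Set (Fin n × Fin n)) :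
    proj E '' psdRank (Fin n) 1 = pattSet E := by
  ext f
  constructor
  · rintro ⟨X, hX, rfl⟩
    obtain ⟨x, hx⟩ := (mem_psdRank_one_iff X).mp hX
    exact ⟨x, fun p => hx p.1.1 p.1.2⟩
  · rintro ⟨x, hx⟩
    refine ⟨Matrix.vecMulVec x x, (mem_psdRank_one_iff _).mpr ⟨x, fun i j => rfl⟩, ?_⟩
    funext p
    exact (hx p).symm

section Comb
variable {n : ℕ} (E : Set (Fin n × Fin n))

def cross (i j : Fin n) : Prop := (i, j) ∈ E ∨ (j, i) ∈ E

variable {E}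

lemma cross_symm {i j : Fin n} (h : cross E i j) : cross E j i := h.symm

lemma cross_ne (hloop : ∀ v : Fin n, (v, v) ∉ E) {i j : Fin n} (h : cross E i j) : i ≠ j := by
  rintro rfl
  rcases h with h | h <;> exact hloop i h

lemma noConfig_bipartite (hn : 2 ≤ n)
    (hloop : ∀ v : Fin n, (v, v) ∉ E)
    (hconn : (graphOf E).Connected)
    (H : ∀ a1 b1 a2 b2 : Fin n, cross E a1 b1 → cross E a1 b2 → cross E a2 b1 →
      cross E a2 b2) :
    ∃ V1 V2 : Set (Fin n), V1.Nonempty ∧ V2.Nonempty ∧ (∀ v, v ∈ V1 ↔ v ∉ V2) ∧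
      ∀ i j : Fin n, ((i, j) ∈ E ∨ (j, i) ∈ E) ↔
        ((i ∈ V1 ∧ j ∈ V2) ∨ (i ∈ V2 ∧ j ∈ V1)) := by
  -- find an edge
  obtain ⟨a, b, hab⟩ : ∃ a b : Fin n, cross E a b := by
    obtain ⟨w⟩ := hconn.preconnected ⟨0, by omega⟩ ⟨1, by omega⟩
    cases w with
    | cons h p => exact ⟨_, _, h.2⟩
  -- every vertex is adjacent to a or to b
  have step : ∀ u v : Fin n, (graphOf E).Adj u v →
      (cross E u a ∨ cross E u b) → (cross E v a ∨ cross E v b) := by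
    rintro u v huv (h | h)
    · exact Or.inr (H a u v b (cross_symm h) hab (cross_symm huv.2))
    · exact Or.inl (H b u v a (cross_symm h) (cross_symm hab) (cross_symm huv.2))
  have walkLem : ∀ (u v : Fin n) (_ : (graphOf E).Walk u v),
      (cross E u a ∨ cross E u b) → (cross E v a ∨ cross E v b) := by
    intro u v w
    induction w with
    | nil => exact id
    | cons h p ih => exact fun h0 => ih (step _ _ h h0)
  have cover : ∀ v : Fin n, cross E v a ∨ cross E v b := by
    intro v
    obtain ⟨w⟩ := hconn.preconnected a v
    exact walkLem a v w (Or.inr hab)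
  have disj : ∀ v : Fin n, ¬(cross E v a ∧ cross E v b) := by
    rintro v ⟨h1, h2⟩
    exact cross_ne hloop (H v b a a h2 h1 hab) rfl
  refine ⟨{v | cross E v b}, {v | cross E v a}, ⟨a, hab⟩, ⟨b, cross_symm hab⟩, ?_, ?_⟩
  · intro v
    constructor
    · intro h1 h2
      exact disj v ⟨h2, h1⟩
    · intro h2
      rcases cover v with h | h
      · exact absurd h h2
      · exact h
  · intro i j
    constructor
    · intro hij
      rcases cover i with h | h
      · exact Or.inr ⟨h, H a i j b (cross_symm h) hab (cross_symm hij)⟩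
      · exact Or.inl ⟨h, H b i j a (cross_symm h) (cross_symm hab) (cross_symm hij)⟩
    · rintro (⟨hi, hj⟩ | ⟨hi, hj⟩)
      · exact H a b i j hab (cross_symm hj) hi
      · exact cross_symm (H a b j i hab (cross_symm hi) hj)

end Comb

open Filter Topology in
open Classical in

lemma config_not_closed {n : ℕ} {E : Set (Fin n × Fin n)}
    (hloop : ∀ v : Fin n, (v, v) ∉ E)
    {a1 b1 a2 b2 : Fin n}
    (h11 : cross E a1 b1) (h12 : cross E a1 b2) (h21 : cross E a2 b1)
    (h22 : ¬ cross E a2 b2) :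
    ¬ IsClosed (pattSet E) := by
  intro hcl
  set lo : Fin n → Prop := fun i => i = a1 ∨ i = b1 with hlo
  set hi : Fin n → Prop := fun i => i = a2 ∨ i = b2 with hhi
  have hd1 : a1 ≠ a2 := by rintro rfl; exact h22 h12
  have hd2 : b1 ≠ b2 := by rintro rfl; exact h22 h21
  have hd3 : a1 ≠ b2 := cross_ne hloop h12
  have hd4 : a2 ≠ b1 := cross_ne hloop h21
  have hlohi : ∀ i, lo i → hi i → False := by
    rintro i (rfl | rfl) (h | h)
    · exact hd1 h
    · exact hd3 h
    · exact hd4 h.symm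
    · exact hd2 h
  set xk : ℕ → Fin n → ℝ := fun k i =>
    if lo i then 1 / (k + 1 : ℝ) else if hi i then (k + 1 : ℝ) else 0 with hxk
  set f : E → ℝ := fun p =>
    if (lo p.1.1 ∧ hi p.1.2) ∨ (hi p.1.1 ∧ lo p.1.2) then 1 else 0 with hf
  have hmem : ∀ k, (fun p : E => xk k p.1.1 * xk k p.1.2) ∈ pattSet E :=
    fun k => ⟨xk k, fun p => rfl⟩
  have hten : Tendsto (fun k => (fun p : E => xk k p.1.1 * xk k p.1.2)) atTop (𝓝 f) := by
    rw [tendsto_pi_nhds]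
    intro p
    by_cases hloi : lo p.1.1
    · by_cases hloj : lo p.1.2
      · have hf0 : f p = 0 := by
          rw [hf]
          exact if_neg (by rintro (⟨hA, hB⟩ | ⟨hA, hB⟩)
                           · exact hlohi _ hloj hB
                           · exact hlohi _ hloi hA)
        have hseq : ∀ k : ℕ, xk k p.1.1 * xk k p.1.2
            = (1 / (k + 1 : ℝ)) * (1 / (k + 1 : ℝ)) := by
          intro k; rw [hxk]; simp only [if_pos hloi, if_pos hloj]
        rw [funext hseq, hf0]
        simpa using
          (tendsto_one_div_add_atTop_nhds_zero_nat (𝕜 := ℝ)).mul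
            (tendsto_one_div_add_atTop_nhds_zero_nat (𝕜 := ℝ))
      · by_cases hhij : hi p.1.2
        · have hf1 : f p = 1 := by rw [hf]; exact if_pos (Or.inl ⟨hloi, hhij⟩)
          have hseq : ∀ k : ℕ, xk k p.1.1 * xk k p.1.2 = 1 := by
            intro k; rw [hxk]
            simp only [if_pos hloi, if_neg hloj, if_pos hhij]
            rw [one_div, inv_mul_cancel₀ (Nat.cast_add_one_ne_zero k)]
          rw [funext hseq, hf1]
          exact tendsto_const_nhds
        · have hf0 : f p = 0 := by
            rw [hf]
            exact if_neg (by rintro (⟨hA, hB⟩ | ⟨hA, hB⟩)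
                             · exact hhij hB
                             · exact hloj hB)
          have hseq : ∀ k : ℕ, xk k p.1.1 * xk k p.1.2 = 0 := by
            intro k; rw [hxk]; simp only [if_neg hloj, if_neg hhij, mul_zero]
          rw [funext hseq, hf0]
          exact tendsto_const_nhds
    · by_cases hhii : hi p.1.1
      · by_cases hloj : lo p.1.2
        · have hf1 : f p = 1 := by rw [hf]; exact if_pos (Or.inr ⟨hhii, hloj⟩)
          have hseq : ∀ k : ℕ, xk k p.1.1 * xk k p.1.2 = 1 := by
            intro k; rw [hxk]
            simp only [if_pos hloj, if_neg hloi, if_pos hhii]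
            rw [one_div, mul_inv_cancel₀ (Nat.cast_add_one_ne_zero k)]
          rw [funext hseq, hf1]
          exact tendsto_const_nhds
        · by_cases hhij : hi p.1.2
          · exfalso
            have hpE : (p.1.1, p.1.2) ∈ E := by rw [Prod.mk.eta]; exact p.2
            rcases hhii with h | h <;> rcases hhij with h' | h'
            · exact hloop a2 (by rw [h, h'] at hpE; exact hpE)
            · exact h22 (Or.inl (by rw [h, h'] at hpE; exact hpE))
            · exact h22 (Or.inr (by rw [h, h'] at hpE; exact hpE))
            · exact hloop b2 (by rw [h, h'] at hpE; exact hpE)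
          · have hf0 : f p = 0 := by
              rw [hf]
              exact if_neg (by rintro (⟨hA, hB⟩ | ⟨hA, hB⟩)
                               · exact hloi hA
                               · exact hloj hB)
            have hseq : ∀ k : ℕ, xk k p.1.1 * xk k p.1.2 = 0 := by
              intro k; rw [hxk]; simp only [if_neg hloj, if_neg hhij, mul_zero]
            rw [funext hseq, hf0]
            exact tendsto_const_nhds
      · have hf0 : f p = 0 := by
          rw [hf]
          exact if_neg (by rintro (⟨hA, hB⟩ | ⟨hA, hB⟩)
                           · exact hloi hA
                           · exact hhii hA)
        have hseq : ∀ k : ℕ, xk k p.1.1 * xk k p.1.2 = 0 := by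
          intro k; rw [hxk]; simp only [if_neg hloi, if_neg hhii, zero_mul]
        rw [funext hseq, hf0]
        exact tendsto_const_nhds
  obtain ⟨x, hx⟩ := hcl.mem_of_tendsto hten (Filter.Eventually.of_forall hmem)
  -- derive the contradiction
  have hxa1 : x a1 ≠ 0 ∧ x b2 ≠ 0 := by
    rcases h12 with h | h
    · have h1 : f ⟨(a1, b2), h⟩ = 1 := by
        rw [hf]; exact if_pos (Or.inl ⟨Or.inl rfl, Or.inr rfl⟩)
      have := hx ⟨(a1, b2), h⟩
      rw [h1] at this
      exact ⟨left_ne_zero_of_mul_eq_one this.symm, right_ne_zero_of_mul_eq_one this.symm⟩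
    · have h1 : f ⟨(b2, a1), h⟩ = 1 := by
        rw [hf]; exact if_pos (Or.inr ⟨Or.inr rfl, Or.inl rfl⟩)
      have := hx ⟨(b2, a1), h⟩
      rw [h1] at this
      exact ⟨right_ne_zero_of_mul_eq_one this.symm, left_ne_zero_of_mul_eq_one this.symm⟩
  have hxb1 : x b1 ≠ 0 := by
    rcases h21 with h | h
    · have h1 : f ⟨(a2, b1), h⟩ = 1 := by
        rw [hf]; exact if_pos (Or.inr ⟨Or.inl rfl, Or.inr rfl⟩)
      have := hx ⟨(a2, b1), h⟩
      rw [h1] at this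
      exact right_ne_zero_of_mul_eq_one this.symm
    · have h1 : f ⟨(b1, a2), h⟩ = 1 := by
        rw [hf]; exact if_pos (Or.inl ⟨Or.inr rfl, Or.inl rfl⟩)
      have := hx ⟨(b1, a2), h⟩
      rw [h1] at this
      exact left_ne_zero_of_mul_eq_one this.symm
  have hzero : x a1 * x b1 = 0 := by
    rcases h11 with h | h
    · have h0 : f ⟨(a1, b1), h⟩ = 0 := by
        rw [hf]
        exact if_neg (by rintro (⟨hA, hB⟩ | ⟨hA, hB⟩)
                         · exact hlohi b1 (Or.inr rfl) hB
                         · exact hlohi a1 (Or.inl rfl) hA)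
      have := hx ⟨(a1, b1), h⟩
      rw [h0] at this
      exact this.symm
    · have h0 : f ⟨(b1, a1), h⟩ = 0 := by
        rw [hf]
        exact if_neg (by rintro (⟨hA, hB⟩ | ⟨hA, hB⟩)
                         · exact hlohi a1 (Or.inl rfl) hB
                         · exact hlohi b1 (Or.inr rfl) hA)
      have := hx ⟨(b1, a1), h⟩
      rw [h0] at this
      rw [mul_comm]
      exact this.symm
  exact mul_ne_zero hxa1.1 hxb1 hzero

open Filter Topology in
open Classical in

lemma bipartite_closed {n : ℕ} {E : Set (Fin n × Fin n)}
    (hup : ∀ p ∈ E, p.1 ≤ p.2)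
    {V1 V2 : Set (Fin n)}
    (hpart : ∀ v, v ∈ V1 ↔ v ∉ V2)
    (hedge : ∀ i j : Fin n, ((i, j) ∈ E ∨ (j, i) ∈ E) ↔
          ((i ∈ V1 ∧ j ∈ V2) ∨ (i ∈ V2 ∧ j ∈ V1))) :
    IsClosed (pattSet E) := by
  apply IsSeqClosed.isClosed
  intro F f hF hlim
  simp only [pattSet, Set.mem_setOf_eq] at hF ⊢
  choose x hx using hF
  set g : (E → ℝ) → Fin n → Fin n → ℝ := fun h i j =>
    if hij : (i, j) ∈ E then h ⟨(i, j), hij⟩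
    else if hji : (j, i) ∈ E then h ⟨(j, i), hji⟩ else 0 with hg
  have hgF : ∀ (k : ℕ) (i j : Fin n), cross E i j → g (F k) i j = x k i * x k j := by
    intro k i j hij
    by_cases h1 : (i, j) ∈ E
    · rw [hg]; simp only [dif_pos h1]; exact hx k ⟨(i, j), h1⟩
    · rcases hij with h | h
      · exact absurd h h1
      · rw [hg]; simp only [dif_neg h1, dif_pos h]
        rw [hx k ⟨(j, i), h⟩]; ring
  have hgs : ∀ i j : Fin n, g f i j = g f j i := by
    intro i j
    by_cases h1 : (i, j) ∈ E
    · by_cases h2 : (j, i) ∈ E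
      · have : i = j := le_antisymm (hup _ h1) (hup _ h2)
        subst this; rfl
      · rw [hg]; simp only [dif_pos h1, dif_neg h2]
    · by_cases h2 : (j, i) ∈ E
      · rw [hg]; simp only [dif_neg h1, dif_pos h2]
      · rw [hg]; simp only [dif_neg h1, dif_neg h2]
  have hglim : ∀ i j : Fin n, Tendsto (fun k => g (F k) i j) atTop (𝓝 (g f i j)) := by
    intro i j
    by_cases h1 : (i, j) ∈ E
    · simp only [hg, dif_pos h1]; exact tendsto_pi_nhds.mp hlim ⟨(i, j), h1⟩
    · by_cases h2 : (j, i) ∈ E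
      · simp only [hg, dif_neg h1, dif_pos h2]; exact tendsto_pi_nhds.mp hlim ⟨(j, i), h2⟩
      · simp only [hg, dif_neg h1, dif_neg h2]; exact tendsto_const_nhds
  have hminor : ∀ a b a' b' : Fin n, cross E a b → cross E a' b' → cross E a b' →
      cross E a' b → g f a b * g f a' b' = g f a b' * g f a' b := by
    intro a b a' b' c1 c2 c3 c4
    refine tendsto_nhds_unique ((hglim a b).mul (hglim a' b')) ?_
    have he : (fun k => g (F k) a b * g (F k) a' b')
        = fun k => g (F k) a b' * g (F k) a' b := by
      funext k
      rw [hgF k _ _ c1, hgF k _ _ c2, hgF k _ _ c3, hgF k _ _ c4]; ring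
    rw [he]
    exact (hglim a b').mul (hglim a' b)
  by_cases hf0 : ∀ p : E, f p = 0
  · exact ⟨0, fun p => by rw [hf0 p]; simp⟩
  push_neg at hf0
  obtain ⟨p0, hp0⟩ := hf0
  have hp0E : (p0.1.1, p0.1.2) ∈ E := by rw [Prod.mk.eta]; exact p0.2
  have hgp0 : g f p0.1.1 p0.1.2 = f p0 := by
    simp only [hg, dif_pos hp0E]
  obtain ⟨a0, b0, ha0, hb0, hg0⟩ :
      ∃ a0 b0 : Fin n, a0 ∈ V1 ∧ b0 ∈ V2 ∧ g f a0 b0 ≠ 0 := by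
    rcases (hedge p0.1.1 p0.1.2).mp (Or.inl hp0E) with ⟨hi1, hi2⟩ | ⟨hi1, hi2⟩
    · exact ⟨p0.1.1, p0.1.2, hi1, hi2, by rw [hgp0]; exact hp0⟩
    · exact ⟨p0.1.2, p0.1.1, hi2, hi1, by rw [hgs, hgp0]; exact hp0⟩
  set x0 : Fin n → ℝ := fun i => if i ∈ V1 then g f i b0 else g f a0 i / g f a0 b0 with hx0
  have main : ∀ a b : Fin n, a ∈ V1 → b ∈ V2 → g f a b = x0 a * x0 b := by
    intro a b ha hb
    have hbn : b ∉ V1 := fun hc => (hpart b).mp hc hb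
    have c1 : cross E a b := (hedge a b).mpr (Or.inl ⟨ha, hb⟩)
    have c2 : cross E a0 b0 := (hedge a0 b0).mpr (Or.inl ⟨ha0, hb0⟩)
    have c3 : cross E a b0 := (hedge a b0).mpr (Or.inl ⟨ha, hb0⟩)
    have c4 : cross E a0 b := (hedge a0 b).mpr (Or.inl ⟨ha0, hb⟩)
    have key := hminor a b a0 b0 c1 c2 c3 c4
    rw [hx0]
    simp only [if_pos ha, if_neg hbn]
    field_simp
    linear_combination key
  refine ⟨x0, fun p => ?_⟩
  have hpE : (p.1.1, p.1.2) ∈ E := by rw [Prod.mk.eta]; exact p.2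
  have hfp : f p = g f p.1.1 p.1.2 := by
    simp only [hg, dif_pos hpE]
  rcases (hedge p.1.1 p.1.2).mp (Or.inl hpE) with ⟨hi1, hi2⟩ | ⟨hi1, hi2⟩
  · rw [hfp]; exact main _ _ hi1 hi2
  · rw [hfp, hgs, main _ _ hi2 hi1]; ring

/-- For a connected loopless graph `G` on `n ≥ 2` vertices,
`P(Sⁿ₁₊)` is closed if and only if `G` is a complete bipartite graph. -/
theorem stmt13 (n : ℕ) (hn : 2 ≤ n) (E : Set (Fin n × Fin n))
    (hup : ∀ p ∈ E, p.1 ≤ p.2)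
    (hloop : ∀ v : Fin n, (v, v) ∉ E)
    (hconn : (graphOf E).Connected) :
    IsClosed (proj E '' psdRank (Fin n) 1) ↔
      ∃ V1 V2 : Set (Fin n), V1.Nonempty ∧ V2.Nonempty ∧ (∀ v, v ∈ V1 ↔ v ∉ V2) ∧
        ∀ i j : Fin n, ((i, j) ∈ E ∨ (j, i) ∈ E) ↔
          ((i ∈ V1 ∧ j ∈ V2) ∨ (i ∈ V2 ∧ j ∈ V1)) := by
  rw [image_eq]
  constructor
  · intro hcl
    by_contra hnc
    have H : ¬ ∀ a1 b1 a2 b2 : Fin n,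
        cross E a1 b1 → cross E a1 b2 → cross E a2 b1 → cross E a2 b2 := by
      intro H
      exact hnc (noConfig_bipartite hn hloop hconn H)
    push_neg at H
    obtain ⟨a1, b1, a2, b2, h1, h2, h3, h4⟩ := H
    exact config_not_closed hloop h1 h2 h3 h4 hcl
  · rintro ⟨V1, V2, -, -, hpart, hedge⟩
    exact bipartite_closed hup hpart hedge
end

section
/- If G has no loops, then P(S^n_{(n−1)+}) is closed. -/
open Matrix

/-- If `G` has no loops, then `P(Sⁿ₍ₙ₋₁₎₊)` is closed. -/
theorem stmt16 (n : ℕ) (hn : 2 ≤ n) (E : Set (Fin n × Fin n))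
    (hup : ∀ p ∈ E, p.1 ≤ p.2)
    (hloop : ∀ v : Fin n, (v, v) ∉ E) :
    IsClosed (proj E '' psdRank (Fin n) (n - 1)) := by
  classical
  haveI : NeZero n := ⟨by omega⟩
  suffices h : proj E '' psdRank (Fin n) (n - 1) = Set.univ by
    rw [h]; exact isClosed_univ
  apply Set.eq_univ_of_forall
  intro y
  -- the symmetric matrix with prescribed off-diagonal entries and zero diagonal
  set A : Matrix (Fin n) (Fin n) ℝ := fun i j =>
    if h : (i, j) ∈ E then y ⟨(i, j), h⟩
    else if h2 : (j, i) ∈ E then y ⟨(j, i), h2⟩ else 0 with hAdef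
  have hnotboth : ∀ i j : Fin n, (i, j) ∈ E → (j, i) ∈ E → False := by
    intro i j h1 h2
    have hij : i = j := le_antisymm (hup _ h1) (hup _ h2)
    exact hloop j (hij ▸ h1)
  have hA : A.IsHermitian := by
    unfold Matrix.IsHermitian
    ext i j
    rw [conjTranspose_apply, star_trivial]; simp only [hAdef]
    by_cases h1 : (j, i) ∈ E
    · have h2 : (i, j) ∉ E := fun h2 => hnotboth _ _ h2 h1
      simp [h1, h2]
    · by_cases h2 : (i, j) ∈ E
      · simp [h1, h2]
      · simp [h1, h2]
  -- minimal eigenvalue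
  set μ : ℝ := Finset.univ.inf' Finset.univ_nonempty hA.eigenvalues with hμdef
  set d : Fin n → ℝ := fun i => hA.eigenvalues i - μ with hddef
  have hd0 : ∀ i, 0 ≤ d i := fun i =>
    sub_nonneg.mpr (Finset.inf'_le _ (Finset.mem_univ i))
  obtain ⟨i₀, -, hi₀⟩ := Finset.exists_mem_eq_inf' Finset.univ_nonempty hA.eigenvalues
  set U : Matrix (Fin n) (Fin n) ℝ := (hA.eigenvectorUnitary : Matrix (Fin n) (Fin n) ℝ)
    with hUdef
  have hUdet : IsUnit U.det :=
    (Matrix.isUnit_iff_isUnit_det U).mp (Unitary.toUnits hA.eigenvectorUnitary).isUnit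
  set X : Matrix (Fin n) (Fin n) ℝ := A - μ • 1 with hXdef
  have hXeq : X = U * Matrix.diagonal d * star U := by
    have hspec := hA.spectral_theorem
    simp only [Unitary.conjStarAlgAut_apply] at hspec
    rw [← hUdef] at hspec
    have h1 : Matrix.diagonal d =
        Matrix.diagonal (RCLike.ofReal ∘ hA.eigenvalues) - μ • (1 : Matrix (Fin n) (Fin n) ℝ) := by
      ext i j
      by_cases h : i = j <;>
        simp [hddef, Matrix.diagonal, h, Matrix.one_apply]
    rw [hXdef, h1, Matrix.mul_sub, Matrix.sub_mul, ← hspec]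
    congr 1
    rw [Matrix.mul_smul, Matrix.smul_mul, mul_one]
    congr 1
    exact ((Matrix.mem_unitaryGroup_iff).mp hA.eigenvectorUnitary.2).symm
  have hpsd : X.PosSemidef := by
    rw [hXeq]
    exact (Matrix.posSemidef_diagonal_iff.mpr hd0).mul_mul_conjTranspose_same U
  have hrank : X.rank ≤ n - 1 := by
    have h1 : X.rank = (Matrix.diagonal d).rank := by
      rw [hXeq, Matrix.rank_mul_eq_left_of_isUnit_det (star U) _
        (by rw [Matrix.star_eq_conjTranspose, Matrix.det_conjTranspose]; exact hUdet.star), Matrix.rank_mul_eq_right_of_isUnit_det U _ hUdet]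
    rw [h1, Matrix.rank_diagonal]
    have hdi₀ : d i₀ = 0 := by simp [hddef, ← hi₀, hμdef]
    have hinj : Function.Injective
        (fun x : {i // d i ≠ 0} => (⟨x.1, fun e => x.2 (e ▸ hdi₀)⟩ : {i // i ≠ i₀})) := by
      intro a b hab
      simpa [Subtype.ext_iff] using hab
    calc Fintype.card {i // d i ≠ 0}
        ≤ Fintype.card {i : Fin n // i ≠ i₀} := Fintype.card_le_of_injective _ hinj
      _ = n - 1 := by
          rw [Fintype.card_subtype_compl, Fintype.card_subtype_eq, Fintype.card_fin]
  refine ⟨X, ⟨hpsd, hrank⟩, ?_⟩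
  funext p
  obtain ⟨⟨i, j⟩, hp⟩ := p
  have hij : i ≠ j := fun h => hloop i (by rwa [h] at hp ⊢)
  simp only [proj, hXdef, Matrix.sub_apply, Matrix.smul_apply, Matrix.one_apply_ne hij,
    smul_zero, sub_zero, hAdef]
  change (A - μ • (1 : Matrix (Fin n) (Fin n) ℝ)) i j = _
  rw [Matrix.sub_apply, Matrix.smul_apply, Matrix.one_apply_ne hij, smul_zero, sub_zero]
  exact dif_pos hp
end

section
/- Let G be a loopless graph on n ≥ 3 vertices. Then P(S^n_{(n−2)+}) is not closed if and only if G is the complete graph K_n, i.e., every pair of distinct vertices is an edge of G. -/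
open Matrix

lemma rank_le_of_rows_zero {n : ℕ} (C : Matrix (Fin n) (Fin n) ℝ) (a b : Fin n) (hab : a ≠ b)
    (hCa : ∀ j, C a j = 0) (hCb : ∀ j, C b j = 0) : C.rank ≤ n - 2 := by
  classical
  set d : Fin n → ℝ := fun i => if i = a ∨ i = b then 0 else 1 with hd
  have hfac : Matrix.diagonal d * C = C := by
    ext i j
    rw [Matrix.diagonal_mul]
    by_cases h : i = a ∨ i = b
    · rcases h with h | h <;> subst h <;> simp [hd, hCa, hCb]
    · simp [hd, h]
  have h1 : C.rank ≤ (Matrix.diagonal d).rank := by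
    conv_lhs => rw [← hfac]
    exact Matrix.rank_mul_le_left _ _
  refine h1.trans ?_
  rw [Matrix.rank_diagonal]
  have : {i // d i ≠ 0} ≃ {i // ¬ (i = a ∨ i = b)} := by
    apply Equiv.subtypeEquivRight
    intro i
    by_cases h : i = a ∨ i = b <;> simp [hd, h]
  rw [Fintype.card_congr this, Fintype.card_subtype_compl]
  have h2 : Fintype.card {i : Fin n // i = a ∨ i = b} = 2 := by
    rw [Fintype.card_subtype]
    have : (Finset.univ.filter fun i : Fin n => i = a ∨ i = b) = {a, b} := by
      ext i; simp
    rw [this, Finset.card_insert_of_notMem (by simpa using hab), Finset.card_singleton]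
  rw [h2, Fintype.card_fin]


lemma mem_psdRank_of_rows_zero {n : ℕ} (C : Matrix (Fin n) (Fin n) ℝ) (a b : Fin n) (hab : a ≠ b)
    (hCa : ∀ j, C a j = 0) (hCb : ∀ j, C b j = 0) : Cᵀ * C ∈ psdRank (Fin n) (n - 2) := by
  constructor
  · have := Matrix.posSemidef_conjTranspose_mul_self C
    rwa [Matrix.conjTranspose_eq_transpose_of_trivial] at this
  · rw [Matrix.rank_transpose_mul_self]
    exact rank_le_of_rows_zero C a b hab hCa hCb


lemma forcing {n : ℕ} (hn : 3 ≤ n) (X : Matrix (Fin n) (Fin n) ℝ)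
    (hrank : X.rank ≤ n - 2)
    (hentry : ∀ i j : Fin n, (i : ℕ) < j → X i j = if (j : ℕ) = (i : ℕ) + 1 then 1 else 0) :
    False := by
  classical
  -- kernel has dimension ≥ 2
  have hrn := LinearMap.finrank_range_add_finrank_ker (X.mulVecLin)
  rw [Module.finrank_pi, Fintype.card_fin] at hrn
  have hker : 2 ≤ Module.finrank ℝ (LinearMap.ker X.mulVecLin) := by
    have : X.rank = Module.finrank ℝ (LinearMap.range X.mulVecLin) := rfl
    omega
  set K := LinearMap.ker X.mulVecLin with hK
  set f : K →ₗ[ℝ] ℝ := (LinearMap.proj (⟨0, by omega⟩ : Fin n)).comp K.subtype with hf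
  have hnotinj : ¬ Function.Injective f := by
    intro h
    have := LinearMap.finrank_le_finrank_of_injective h
    rw [Module.finrank_self] at this
    omega
  rw [← LinearMap.ker_eq_bot] at hnotinj
  obtain ⟨q, hq⟩ := Submodule.ne_bot_iff _ |>.mp hnotinj
  obtain ⟨hq1, hq2⟩ := hq
  set p : Fin n → ℝ := (q : Fin n → ℝ) with hp
  have hp0 : p ⟨0, by omega⟩ = 0 := hq1
  have hpker : X *ᵥ p = 0 := q.2
  have hpne : p ≠ 0 := by
    intro h
    exact hq2 (Subtype.ext h)
  -- induction killing all entries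
  have hz : ∀ k : ℕ, ∀ (h : k < n), p ⟨k, h⟩ = 0 := by
    intro k
    induction k using Nat.strong_induction_on with
    | _ k IH =>
      intro h
      match k, h with
      | 0, h => exact hp0
      | (j+1), h =>
        have hj : j < n := by omega
        have hrow : (X *ᵥ p) ⟨j, hj⟩ = 0 := by rw [hpker]; rfl
        rw [Matrix.mulVec, dotProduct] at hrow
        rw [Finset.sum_eq_single (⟨j+1, h⟩ : Fin n)] at hrow
        · have h1 : X ⟨j, hj⟩ ⟨j+1, h⟩ = 1 := by
            rw [hentry _ _ (by simp)]
            simp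
          rw [h1, one_mul] at hrow
          exact hrow
        · intro l _ hl
          rcases lt_or_gt_of_ne (fun hv : (l : ℕ) = j + 1 => hl (Fin.ext hv)) with hv | hv
          · have : p l = 0 := by
              have := IH l (by omega) l.isLt
              rwa [Fin.eta] at this
            rw [this, mul_zero]
          · have : X ⟨j, hj⟩ l = 0 := by
              rw [hentry _ _ (by simp; omega)]
              simp; omega
            rw [this, zero_mul]
        · intro hmem
          exact absurd (Finset.mem_univ _) hmem
  apply hpne
  funext l
  have := hz l.val l.isLt
  rwa [Fin.eta] at this


/-- Columns of `Cm n s` are Gram vectors for the path-pattern construction. -/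
noncomputable def Cm (n : ℕ) (s : ℝ) : Matrix (Fin n) (Fin n) ℝ :=
  fun i j =>
    if (j : ℕ) = 0 then (if (i : ℕ) = 0 then s⁻¹ else 0)
    else if (j : ℕ) = n - 1 then (if (i : ℕ) + 3 = n then s⁻¹ else 0)
    else if (i : ℕ) + 1 = (j : ℕ) then s
    else if (i : ℕ) + 2 = (j : ℕ) then s⁻¹ else 0

lemma Cm_rows_zero {n : ℕ} (hn : 3 ≤ n) (s : ℝ) (r : Fin n) (hr : n - 2 ≤ (r : ℕ)) :
    ∀ j, Cm n s r j = 0 := by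
  intro j
  have hj := j.isLt
  have hrn := r.isLt
  simp only [Cm]
  split_ifs <;> first | rfl | (exfalso; omega)

lemma Cm_entry {n : ℕ} (hn : 3 ≤ n) {s : ℝ} (hs : s ≠ 0) (i j : Fin n) (hij : (i : ℕ) < (j : ℕ)) :
    ((Cm n s)ᵀ * Cm n s) i j =
      if (j : ℕ) = (i : ℕ) + 1 then 1
      else if (i : ℕ) = 0 ∧ (j : ℕ) = 2 then s⁻¹ * s⁻¹ else 0 := by
  have hj := j.isLt
  have hi := i.isLt
  have hmul : ∀ i j : Fin n, ((Cm n s)ᵀ * Cm n s) i j = ∑ k, Cm n s k i * Cm n s k j := by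
    intro i j
    rw [Matrix.mul_apply]
    rfl
  rw [hmul]
  by_cases h1 : (j : ℕ) = (i : ℕ) + 1
  · -- consecutive: value 1
    rw [if_pos h1]
    by_cases h2 : (i : ℕ) = 0
    · -- k₀ = 0
      rw [Finset.sum_eq_single (⟨0, by omega⟩ : Fin n)]
      · simp only [Cm]
        split_ifs <;> first | (exfalso; omega) | (field_simp)
      · intro k _ hk
        have hkv : (k : ℕ) ≠ 0 := fun hv => hk (Fin.ext hv)
        have := k.isLt
        simp only [Cm]
        split_ifs <;> first | ring1 | (exfalso; omega)
      · intro hmem; exact absurd (Finset.mem_univ _) hmem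
    · by_cases h3 : (j : ℕ) = n - 1
      · -- k₀ = n-3
        rw [Finset.sum_eq_single (⟨n - 3, by omega⟩ : Fin n)]
        · simp only [Cm]
          split_ifs <;> first | (exfalso; omega) | (field_simp)
        · intro k _ hk
          have hkv : (k : ℕ) ≠ n - 3 := fun hv => hk (Fin.ext hv)
          have := k.isLt
          simp only [Cm]
          split_ifs <;> first | ring1 | (exfalso; omega)
        · intro hmem; exact absurd (Finset.mem_univ _) hmem
      · -- middle, k₀ = i-1
        rw [Finset.sum_eq_single (⟨(i : ℕ) - 1, by omega⟩ : Fin n)]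
        · simp only [Cm]
          split_ifs <;> first | (exfalso; omega) | (field_simp)
        · intro k _ hk
          have hkv : (k : ℕ) ≠ (i : ℕ) - 1 := fun hv => hk (Fin.ext hv)
          have := k.isLt
          simp only [Cm]
          split_ifs <;> first | ring1 | (exfalso; omega)
        · intro hmem; exact absurd (Finset.mem_univ _) hmem
  · rw [if_neg h1]
    by_cases h2 : (i : ℕ) = 0 ∧ (j : ℕ) = 2
    · rw [if_pos h2]
      obtain ⟨h2a, h2b⟩ := h2
      rw [Finset.sum_eq_single (⟨0, by omega⟩ : Fin n)]
      · simp only [Cm]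
        split_ifs <;> first | (exfalso; omega) | rfl
      · intro k _ hk
        have hkv : (k : ℕ) ≠ 0 := fun hv => hk (Fin.ext hv)
        have := k.isLt
        simp only [Cm]
        split_ifs <;> first | ring1 | (exfalso; omega)
      · intro hmem; exact absurd (Finset.mem_univ _) hmem
    · rw [if_neg h2]
      apply Finset.sum_eq_zero
      intro k _
      have := k.isLt
      have h2' : ¬ ((i : ℕ) = 0 ∧ (j : ℕ) = 2) := h2
      simp only [Cm]
      split_ifs <;> first | ring1 | (exfalso; omega)


lemma posDef_of_shift {n : ℕ} (A : Matrix (Fin n) (Fin n) ℝ)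
    (hAsym : ∀ i j, A i j = A j i) :
    ((1 + ∑ i, ∑ j, |A i j|) • (1 : Matrix (Fin n) (Fin n) ℝ) + A).PosDef := by
  classical
  set T : ℝ := 1 + ∑ i, ∑ j, |A i j| with hT
  set M : Matrix (Fin n) (Fin n) ℝ := T • (1 : Matrix (Fin n) (Fin n) ℝ) + A with hM
  have hMt : Mᵀ = M := by
    ext i j
    simp only [hM, Matrix.transpose_apply, Matrix.add_apply, Matrix.smul_apply,
      Matrix.one_apply, smul_eq_mul]
    rw [hAsym j i]
    by_cases h : i = j
    · subst h; simp
    · rw [if_neg h, if_neg (fun hh => h hh.symm)]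
  rw [Matrix.posDef_iff_dotProduct_mulVec]; constructor
  · show Mᴴ = M
    rwa [Matrix.conjTranspose_eq_transpose_of_trivial]
  · intro y hy
    have hstar : star y = y := by
      funext i; simp
    rw [hstar]
    have hexp : dotProduct y (M *ᵥ y) = T * (∑ i, y i * y i) + ∑ i, ∑ j, y i * (A i j * y j) := by
      rw [hM, Matrix.add_mulVec, Matrix.smul_mulVec, Matrix.one_mulVec]
      rw [dotProduct_add]
      congr 1
      · simp only [dotProduct, Pi.smul_apply, smul_eq_mul]
        rw [Finset.mul_sum]
        apply Finset.sum_congr rfl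
        intro i _
        ring
      · simp [dotProduct, Matrix.mulVec, Finset.mul_sum]
    rw [hexp]
    set Q : ℝ := ∑ i, y i * y i with hQ
    have hQi : ∀ i, y i * y i ≤ Q := by
      intro i
      apply Finset.single_le_sum (f := fun k => y k * y k)
      · intro k _; exact mul_self_nonneg _
      · exact Finset.mem_univ i
    have hQpos : 0 < Q := by
      have : ∃ i, y i ≠ 0 := by
        by_contra h
        push_neg at h
        exact hy (funext h)
      obtain ⟨i, hi⟩ := this
      apply Finset.sum_pos' (fun k _ => mul_self_nonneg _) ⟨i, Finset.mem_univ i, mul_self_pos.mpr hi⟩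
    have hbound : |∑ i, ∑ j, y i * (A i j * y j)| ≤ (∑ i, ∑ j, |A i j|) * Q := by
      calc |∑ i, ∑ j, y i * (A i j * y j)| ≤ ∑ i, |∑ j, y i * (A i j * y j)| :=
            Finset.abs_sum_le_sum_abs _ _
        _ ≤ ∑ i, ∑ j, |y i * (A i j * y j)| :=
            Finset.sum_le_sum (fun i _ => Finset.abs_sum_le_sum_abs _ _)
        _ ≤ ∑ i, ∑ j, |A i j| * Q := by
            apply Finset.sum_le_sum
            intro i _
            apply Finset.sum_le_sum
            intro j _
            have h1 : |y i * (A i j * y j)| = |A i j| * (|y i| * |y j|) := by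
              rw [abs_mul, abs_mul]; ring
            rw [h1]
            apply mul_le_mul_of_nonneg_left _ (abs_nonneg _)
            have hi := hQi i
            have hj := hQi j
            nlinarith [abs_nonneg (y i), abs_nonneg (y j), sq_abs (y i), sq_abs (y j),
              abs_mul_abs_self (y i), abs_mul_abs_self (y j)]
        _ = (∑ i, ∑ j, |A i j|) * Q := by
            rw [Finset.sum_mul]
            congr 1
            funext i
            rw [Finset.sum_mul]
    have habs := (abs_le.mp hbound).1
    have : T = 1 + ∑ i, ∑ j, |A i j| := hT
    nlinarith


lemma not_closed_of_complete {n : ℕ} (hn : 3 ≤ n) (E : Set (Fin n × Fin n))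
    (hup : ∀ p ∈ E, p.1 ≤ p.2) (hloop : ∀ v : Fin n, (v, v) ∉ E)
    (hcomp : ∀ i j : Fin n, i ≠ j → ((i, j) ∈ E ∨ (j, i) ∈ E)) :
    ¬ IsClosed (proj E '' psdRank (Fin n) (n - 2)) := by
  classical
  have hEmem : ∀ p ∈ E, (p.1 : ℕ) < (p.2 : ℕ) := by
    intro p hp
    have h1 : (p.1 : ℕ) ≤ (p.2 : ℕ) := hup p hp
    rcases lt_or_eq_of_le h1 with h | h
    · exact h
    · exfalso
      have : p = (p.1, p.1) := by
        have : p.1 = p.2 := Fin.ext h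
        rw [Prod.mk.injEq]
        exact ⟨rfl, this.symm⟩
      exact hloop p.1 (this ▸ hp)
  have hE : ∀ i j : Fin n, (i : ℕ) < (j : ℕ) → (i, j) ∈ E := by
    intro i j hij
    rcases hcomp i j (fun h => by simp [h] at hij) with h | h
    · exact h
    · exfalso
      have := hEmem _ h
      simp at this
      omega
  set t : E → ℝ := fun p => if ((p : Fin n × Fin n).2 : ℕ) = ((p : Fin n × Fin n).1 : ℕ) + 1 then 1 else 0 with ht
  intro hclosed
  have hab : (⟨n - 2, by omega⟩ : Fin n) ≠ (⟨n - 1, by omega⟩ : Fin n) := by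
    intro h
    have := Fin.mk.injEq (n-2) (by omega : n - 2 < n) (n-1) (by omega : n - 1 < n) ▸ h
    have := congrArg Fin.val h; simp only [Fin.val_mk] at this
    omega
  have hmem : ∀ k : ℕ, proj E ((Cm n ((k : ℝ) + 1))ᵀ * Cm n ((k : ℝ) + 1)) ∈
      proj E '' psdRank (Fin n) (n - 2) := by
    intro k
    refine ⟨_, ?_, rfl⟩
    apply mem_psdRank_of_rows_zero _ _ _ hab
    · exact Cm_rows_zero hn _ _ (by simp only [Fin.val_mk]; omega)
    · exact Cm_rows_zero hn _ _ (by simp only [Fin.val_mk]; omega)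
  have htend : Filter.Tendsto (fun k : ℕ => proj E ((Cm n ((k : ℝ) + 1))ᵀ * Cm n ((k : ℝ) + 1)))
      Filter.atTop (nhds t) := by
    rw [tendsto_pi_nhds]
    intro p
    have hlt : ((p : Fin n × Fin n).1 : ℕ) < ((p : Fin n × Fin n).2 : ℕ) := hEmem _ p.2
    have hval : ∀ k : ℕ, proj E ((Cm n ((k : ℝ) + 1))ᵀ * Cm n ((k : ℝ) + 1)) p =
        if ((p : Fin n × Fin n).2 : ℕ) = ((p : Fin n × Fin n).1 : ℕ) + 1 then 1
        else if ((p : Fin n × Fin n).1 : ℕ) = 0 ∧ ((p : Fin n × Fin n).2 : ℕ) = 2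
          then ((k : ℝ) + 1)⁻¹ * ((k : ℝ) + 1)⁻¹ else 0 := by
      intro k
      exact Cm_entry hn (by positivity) _ _ hlt
    simp only [hval, ht]
    by_cases h1 : ((p : Fin n × Fin n).2 : ℕ) = ((p : Fin n × Fin n).1 : ℕ) + 1
    · simp only [if_pos h1]
      exact tendsto_const_nhds
    · simp only [if_neg h1]
      by_cases h2 : ((p : Fin n × Fin n).1 : ℕ) = 0 ∧ ((p : Fin n × Fin n).2 : ℕ) = 2
      · simp only [if_pos h2]
        have hbase : Filter.Tendsto (fun k : ℕ => ((k : ℝ) + 1)⁻¹) Filter.atTop (nhds 0) := by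
          have := tendsto_one_div_add_atTop_nhds_zero_nat (𝕜 := ℝ)
          simpa [one_div] using this
        simpa using hbase.mul hbase
      · simp only [if_neg h2]
        exact tendsto_const_nhds
  have htmem : t ∈ proj E '' psdRank (Fin n) (n - 2) :=
    hclosed.mem_of_tendsto htend (Filter.Eventually.of_forall hmem)
  obtain ⟨X, hXmem, hXeq⟩ := htmem
  apply forcing hn X hXmem.2
  intro i j hij
  have hmemE : (i, j) ∈ E := hE i j hij
  have := congrFun hXeq ⟨(i, j), hmemE⟩
  simpa [proj, ht] using this


lemma image_univ_of_missing (hn : 3 ≤ n) (E : Set (Fin n × Fin n))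
    (hup : ∀ p ∈ E, p.1 ≤ p.2) (hloop : ∀ v : Fin n, (v, v) ∉ E)
    (a b : Fin n) (hab : a ≠ b) (haE : (a, b) ∉ E) (hbE : (b, a) ∉ E) :
    proj E '' psdRank (Fin n) (n - 2) = Set.univ := by
  classical
  apply Set.eq_univ_of_forall
  intro x
  -- symmetrized data
  set xh : Fin n → Fin n → ℝ := fun i j =>
    if h : (i, j) ∈ E then x ⟨(i, j), h⟩ else if h : (j, i) ∈ E then x ⟨(j, i), h⟩ else 0 with hxh
  have hnotboth : ∀ i j : Fin n, (i, j) ∈ E → (j, i) ∈ E → False := by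
    intro i j h1 h2
    have l1 : i ≤ j := hup _ h1
    have l2 : j ≤ i := hup _ h2
    have : i = j := le_antisymm l1 l2
    exact hloop i (by rwa [this] at h1 ⊢)
  have hxhsym : ∀ i j : Fin n, xh i j = xh j i := by
    intro i j
    by_cases h1 : (i, j) ∈ E
    · have h2 : (j, i) ∉ E := fun h2 => hnotboth i j h1 h2
      simp [hxh, h1, h2]
    · by_cases h2 : (j, i) ∈ E
      · simp [hxh, h1, h2]
      · simp [hxh, h1, h2]
  set A : Matrix (Fin n) (Fin n) ℝ := fun i j =>
    if i = a ∨ i = b ∨ j = a ∨ j = b ∨ i = j then 0 else xh i j with hA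
  have hAsym : ∀ i j, A i j = A j i := by
    intro i j
    simp only [hA]
    by_cases h : i = a ∨ i = b ∨ j = a ∨ j = b ∨ i = j
    · rw [if_pos h, if_pos (by tauto)]
    · rw [if_neg h, if_neg (by tauto), hxhsym]
  set T : ℝ := 1 + ∑ i, ∑ j, |A i j| with hT
  set M : Matrix (Fin n) (Fin n) ℝ := T • (1 : Matrix (Fin n) (Fin n) ℝ) + A with hM
  have hMPD : M.PosDef := posDef_of_shift A hAsym
  have hMt : Mᵀ = M := by
    have := hMPD.isHermitian
    rwa [Matrix.IsHermitian, Matrix.conjTranspose_eq_transpose_of_trivial] at this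
  have hdet : IsUnit M.det := isUnit_iff_ne_zero.mpr (ne_of_gt hMPD.det_pos)
  have hMinv : M⁻¹ * M = 1 := Matrix.nonsing_inv_mul M hdet
  have hMinvPD : M⁻¹.PosDef := hMPD.inv
  have hMinvt : M⁻¹ᵀ = M⁻¹ := by
    rw [Matrix.transpose_nonsing_inv, hMt]
  -- off-rows of M vanish
  have hMrow : ∀ i j : Fin n, i ≠ j → (i = a ∨ i = b ∨ j = a ∨ j = b) → M i j = 0 := by
    intro i j hij h
    simp only [hM, Matrix.add_apply, Matrix.smul_apply, Matrix.one_apply, smul_eq_mul]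
    rw [if_neg hij, hA]
    simp only
    rw [if_pos (by tauto)]
    ring
  have hMoff : ∀ i j : Fin n, i ≠ j → i ≠ a → i ≠ b → j ≠ a → j ≠ b → M i j = xh i j := by
    intro i j hij h1 h2 h3 h4
    simp only [hM, Matrix.add_apply, Matrix.smul_apply, Matrix.one_apply, smul_eq_mul]
    rw [if_neg hij, hA]
    simp only
    rw [if_neg (by tauto)]
    ring
  -- the bordered matrix
  set D : Matrix (Fin n) (Fin n) ℝ := fun i j =>
    if j = a ∨ j = b then (if i = a ∨ i = b then 0 else xh j i) else M i j with hD
  have hDa : ∀ j, D a j = 0 := by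
    intro j
    by_cases h : j = a ∨ j = b
    · rcases h with h | h <;> subst h <;> simp [hD]
    · simp only [hD]
      rw [if_neg h]
      push_neg at h
      exact hMrow a j (fun hh => h.1 hh.symm) (Or.inl rfl)
  have hDb : ∀ j, D b j = 0 := by
    intro j
    by_cases h : j = a ∨ j = b
    · rcases h with h | h <;> subst h <;> simp [hD]
    · simp only [hD]
      rw [if_neg h]
      push_neg at h
      exact hMrow b j (fun hh => h.2 hh.symm) (Or.inr (Or.inl rfl))
  set X : Matrix (Fin n) (Fin n) ℝ := Dᵀ * M⁻¹ * D with hX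
  have hXmem : X ∈ psdRank (Fin n) (n - 2) := by
    constructor
    · have := hMinvPD.posSemidef.mul_mul_conjTranspose_same (B := Dᵀ)
      rwa [Matrix.conjTranspose_eq_transpose_of_trivial, Matrix.transpose_transpose] at this
    · calc X.rank ≤ D.rank := Matrix.rank_mul_le_right _ _
        _ ≤ n - 2 := rank_le_of_rows_zero D a b hab hDa hDb
  have hXcol : ∀ i j : Fin n, j ≠ a → j ≠ b → X i j = D j i := by
    intro i j h1 h2
    have hDcol : ∀ k, D k j = M k j := by
      intro k
      simp only [hD]
      rw [if_neg (by tauto)]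
    have step1 : X i j = ((Dᵀ * M⁻¹) * M) i j := by
      rw [hX, Matrix.mul_apply, Matrix.mul_apply]
      apply Finset.sum_congr rfl
      intro k _
      rw [hDcol k]
    rw [step1, Matrix.mul_assoc, hMinv, Matrix.mul_one, Matrix.transpose_apply]
  have hXsym : ∀ i j, X i j = X j i := by
    intro i j
    have : Xᵀ = X := by
      rw [hX, Matrix.transpose_mul, Matrix.transpose_mul, Matrix.transpose_transpose, hMinvt,
        Matrix.mul_assoc]
    conv_lhs => rw [← this]
    rfl
  refine ⟨X, hXmem, ?_⟩
  funext p
  obtain ⟨⟨i, j⟩, hp⟩ := p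
  show X i j = x ⟨(i, j), hp⟩
  have hij : i ≠ j := by
    intro h
    exact hloop i (by rwa [← h] at hp)
  have hxval : xh i j = x ⟨(i, j), hp⟩ := by
    simp [hxh, hp]
  by_cases hja : j = a
  · -- i ∉ {a, b}
    have hia : i ≠ a := fun h => hij (h.trans hja.symm)
    have hib : i ≠ b := by
      intro h
      apply hbE
      rw [← h, ← hja]
      exact hp
    rw [hXsym, hXcol j i hia hib]
    simp only [hD]
    rw [if_pos (Or.inl hja), if_neg (by tauto), ← hxhsym, hxval]
  · by_cases hjb : j = b
    · have hib : i ≠ b := fun h => hij (h.trans hjb.symm)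
      have hia : i ≠ a := by
        intro h
        apply haE
        rw [← h, ← hjb]
        exact hp
      rw [hXsym, hXcol j i hia hib]
      simp only [hD]
      rw [if_pos (Or.inr hjb), if_neg (by tauto), ← hxhsym, hxval]
    · rw [hXcol i j hja hjb]
      simp only [hD]
      by_cases hi : i = a ∨ i = b
      · rw [if_pos hi, if_neg (by tauto), hxval]
      · rw [if_neg hi]
        push_neg at hi
        rw [hMoff j i (fun h => hij h.symm) hja hjb hi.1 hi.2, ← hxhsym, hxval]

/-- For a loopless graph `G` on `n ≥ 3` vertices,
`P(Sⁿ₍ₙ₋₂₎₊)` is not closed if and only if `G` is the complete graph `Kₙ`. -/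
theorem stmt17 (n : ℕ) (hn : 3 ≤ n) (E : Set (Fin n × Fin n))
    (hup : ∀ p ∈ E, p.1 ≤ p.2)
    (hloop : ∀ v : Fin n, (v, v) ∉ E) :
    ¬ IsClosed (proj E '' psdRank (Fin n) (n - 2)) ↔
      ∀ i j : Fin n, i ≠ j → ((i, j) ∈ E ∨ (j, i) ∈ E) := by
  constructor
  · intro hnc
    by_contra h
    push_neg at h
    obtain ⟨i, j, hij, hijE, hjiE⟩ := h
    apply hnc
    rw [image_univ_of_missing hn E hup hloop i j hij hijE hjiE]
    exact isClosed_univ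
  · intro hcomp
    exact not_closed_of_complete hn E hup hloop hcomp
end

section
/- Suppose G has no loops and contains a clique of size k > 2, i.e., k distinct pairwise-adjacent vertices. Then for every integer j with 3 ≤ j ≤ k, the set P(S^n_{(j−2)+}) is not closed. -/
open Matrix

noncomputable section Aux18

open Filter Topology

/-- The `p`-th test vector in `ℝ^(m+1)` (coordinates indexed by naturals `< m+1`),
scale parameter `t`. Indices `p = 0, …, m+1` form the "negative clique" family,
index `p = m+2` is the extra vector. -/
def wv (m : ℕ) (t : ℝ) (p i : ℕ) : ℝ :=
  if p = m+2 then (if i = m then -t⁻¹ else 0)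
  else if i+1 < p then 0 else if i+1 = p then t else -t⁻¹

/-- Limit values of the pairwise inner products. -/
def ell (m : ℕ) (p q : ℕ) : ℝ :=
  if max p q = m+2 then (if min p q = m+1 then -1 else 0) else -1

lemma ell_symm (m p q : ℕ) : ell m p q = ell m q p := by
  simp [ell, max_comm, min_comm]

/-- The inner product of `wv p` and `wv q`. -/
def dotw (m : ℕ) (t : ℝ) (p q : ℕ) : ℝ :=
  ∑ i ∈ Finset.range (m+1), wv m t p i * wv m t q i

lemma dotw_lt (m : ℕ) {t : ℝ} (ht : t ≠ 0) {p q : ℕ} (hpq : p < q) (hq : q ≤ m+1) :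
    dotw m t p q = -1 +
      (((Finset.range (m+1)).filter (fun i => q < i+1)).card : ℝ) * (t⁻¹ * t⁻¹) := by
  have key : ∀ i ∈ Finset.range (m+1), wv m t p i * wv m t q i =
      ((if i = q - 1 then (-1 : ℝ) else 0) + (if q < i+1 then t⁻¹ * t⁻¹ else 0)) := by
    intro i _
    have hpm : p ≠ m+2 := by omega
    have hqm : q ≠ m+2 := by omega
    unfold wv
    rw [if_neg hpm, if_neg hqm]
    rcases lt_trichotomy (i+1) q with h | h | h
    · rw [if_pos h, mul_zero, if_neg (by omega), if_neg (by omega), add_zero]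
    · rw [if_neg (by omega), if_neg (by omega), if_neg (by omega), if_pos h,
        if_pos (by omega), if_neg (by omega), add_zero]
      field_simp
    · rw [if_neg (by omega), if_neg (by omega), if_neg (by omega), if_neg (by omega),
        if_neg (by omega), if_pos (by omega)]
      ring
  rw [dotw, Finset.sum_congr rfl key, Finset.sum_add_distrib]
  congr 1
  · rw [Finset.sum_ite_eq' (Finset.range (m+1)) (q-1) (fun _ => (-1 : ℝ))]
    rw [if_pos (Finset.mem_range.mpr (by omega))]
  · rw [← Finset.sum_filter, Finset.sum_const, nsmul_eq_mul]

lemma dotw_mid (m : ℕ) (t : ℝ) {p : ℕ} (hp : p ≤ m) :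
    dotw m t p (m+2) = t⁻¹ * t⁻¹ := by
  have key : ∀ i ∈ Finset.range (m+1), wv m t p i * wv m t (m+2) i =
      (if i = m then t⁻¹ * t⁻¹ else 0) := by
    intro i _
    unfold wv
    rw [if_neg (by omega : p ≠ m+2), if_pos rfl]
    by_cases h : i = m
    · subst h
      rw [if_pos rfl, if_pos rfl, if_neg (by omega), if_neg (by omega)]
      ring
    · rw [if_neg h, if_neg h, mul_zero]
  rw [dotw, Finset.sum_congr rfl key,
    Finset.sum_ite_eq' (Finset.range (m+1)) m (fun _ => t⁻¹ * t⁻¹),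
    if_pos (Finset.mem_range.mpr (by omega))]

lemma dotw_last (m : ℕ) {t : ℝ} (ht : t ≠ 0) :
    dotw m t (m+1) (m+2) = -1 := by
  have key : ∀ i ∈ Finset.range (m+1), wv m t (m+1) i * wv m t (m+2) i =
      (if i = m then (-1 : ℝ) else 0) := by
    intro i _
    unfold wv
    rw [if_neg (by omega : m+1 ≠ m+2), if_pos rfl]
    by_cases h : i = m
    · subst h
      rw [if_pos rfl, if_pos rfl, if_neg (by omega)]
      field_simp
      simp
    · rw [if_neg h, if_neg h, mul_zero]
  rw [dotw, Finset.sum_congr rfl key,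
    Finset.sum_ite_eq' (Finset.range (m+1)) m (fun _ => (-1 : ℝ)),
    if_pos (Finset.mem_range.mpr (by omega))]

variable {m n : ℕ}

/-- The factor matrix: column at `c p` is `wv p`, other columns vanish. -/
def matA (m n : ℕ) (t : ℝ) (c : Fin (m+3) → Fin n) : Matrix (Fin (m+1)) (Fin n) ℝ :=
  fun i v => ∑ p : Fin (m+3), if c p = v then wv m t (p : ℕ) (i : ℕ) else 0

/-- The limit matrix (used only through its projection). -/
def Xlim (m n : ℕ) (c : Fin (m+3) → Fin n) : Matrix (Fin n) (Fin n) ℝ :=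
  fun u v => ∑ p : Fin (m+3), ∑ q : Fin (m+3),
    if c p = u ∧ c q = v then ell m (p : ℕ) (q : ℕ) else 0

lemma matA_apply (t : ℝ) {c : Fin (m+3) → Fin n} (hc : Function.Injective c)
    (p : Fin (m+3)) (i : Fin (m+1)) :
    matA m n t c i (c p) = wv m t (p : ℕ) (i : ℕ) := by
  unfold matA
  rw [Finset.sum_eq_single p]
  · rw [if_pos rfl]
  · intro q _ hqp; exact if_neg (fun h => hqp (hc h))
  · intro h; exact absurd (Finset.mem_univ p) h

lemma matA_zero (t : ℝ) {c : Fin (m+3) → Fin n} {v : Fin n}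
    (hv : ∀ p, c p ≠ v) (i : Fin (m+1)) :
    matA m n t c i v = 0 := by
  unfold matA
  exact Finset.sum_eq_zero fun p _ => if_neg (hv p)

lemma entry_eq (t : ℝ) (c : Fin (m+3) → Fin n) (u v : Fin n) :
    ((matA m n t c)ᴴ * matA m n t c) u v
      = ∑ i : Fin (m+1), matA m n t c i u * matA m n t c i v := by
  rw [Matrix.mul_apply]
  simp [conjTranspose_apply]

lemma entry_apply (t : ℝ) {c : Fin (m+3) → Fin n} (hc : Function.Injective c)
    (p q : Fin (m+3)) :
    ((matA m n t c)ᴴ * matA m n t c) (c p) (c q) = dotw m t (p : ℕ) (q : ℕ) := by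
  rw [entry_eq]
  have h : ∀ i : Fin (m+1), matA m n t c i (c p) * matA m n t c i (c q)
      = wv m t (p : ℕ) (i : ℕ) * wv m t (q : ℕ) (i : ℕ) := fun i => by
    rw [matA_apply t hc, matA_apply t hc]
  calc ∑ i : Fin (m+1), matA m n t c i (c p) * matA m n t c i (c q)
      = ∑ i : Fin (m+1), wv m t (p : ℕ) (i : ℕ) * wv m t (q : ℕ) (i : ℕ) :=
        Finset.sum_congr rfl fun i _ => h i
    _ = dotw m t (p : ℕ) (q : ℕ) :=
        Fin.sum_univ_eq_sum_range (fun i => wv m t (p : ℕ) i * wv m t (q : ℕ) i) (m+1)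

lemma entry_zero (t : ℝ) {c : Fin (m+3) → Fin n} {u v : Fin n}
    (h : (∀ p, c p ≠ u) ∨ (∀ p, c p ≠ v)) :
    ((matA m n t c)ᴴ * matA m n t c) u v = 0 := by
  rw [entry_eq]
  refine Finset.sum_eq_zero fun i _ => ?_
  rcases h with h | h
  · rw [matA_zero t h, zero_mul]
  · rw [matA_zero t h, mul_zero]

lemma Xlim_apply {c : Fin (m+3) → Fin n} (hc : Function.Injective c) (p q : Fin (m+3)) :
    Xlim m n c (c p) (c q) = ell m (p : ℕ) (q : ℕ) := by
  unfold Xlim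
  rw [Finset.sum_eq_single p]
  · rw [Finset.sum_eq_single q]
    · rw [if_pos ⟨rfl, rfl⟩]
    · intro b _ hbq; exact if_neg (fun h => hbq (hc h.2))
    · intro h; exact absurd (Finset.mem_univ q) h
  · intro a _ hap
    exact Finset.sum_eq_zero fun b _ => if_neg (fun h => hap (hc h.1))
  · intro h; exact absurd (Finset.mem_univ p) h

lemma Xlim_zero {c : Fin (m+3) → Fin n} {u v : Fin n}
    (h : (∀ p, c p ≠ u) ∨ (∀ p, c p ≠ v)) :
    Xlim m n c u v = 0 := by
  unfold Xlim
  refine Finset.sum_eq_zero fun p _ => Finset.sum_eq_zero fun q _ => ?_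
  rcases h with h | h
  · exact if_neg (fun hh => h p hh.1)
  · exact if_neg (fun hh => h q hh.2)

lemma psd_diag_nonneg {N : ℕ} {X : Matrix (Fin N) (Fin N) ℝ} (h : X.PosSemidef)
    (u : Fin N) : 0 ≤ X u u := by
  exact h.diag_nonneg

lemma cols_dep {N r : ℕ} (X : Matrix (Fin N) (Fin N) ℝ) (hrank : X.rank ≤ r)
    (f : Fin (r+1) → Fin N) :
    ∃ ca : Fin (r+1) → ℝ, (∀ u, ∑ b, ca b * X u (f b) = 0) ∧ ∃ b, ca b ≠ 0 := by
  have hdep : ¬ LinearIndependent ℝ (fun b : Fin (r+1) => (fun u => X u (f b) : Fin N → ℝ)) := by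
    intro hli
    have h1 : ∀ b, (fun u => X u (f b) : Fin N → ℝ) ∈ LinearMap.range X.mulVecLin := by
      intro b
      refine ⟨Pi.single (f b) 1, ?_⟩
      ext u
      simp [Matrix.mulVecLin_apply]
    let colsW : Fin (r+1) → LinearMap.range X.mulVecLin := fun b => ⟨_, h1 b⟩
    have hliW : LinearIndependent ℝ colsW :=
      LinearIndependent.of_comp ((LinearMap.range X.mulVecLin).subtype) (by exact hli)
    have hcard := hliW.fintype_card_le_finrank
    rw [Fintype.card_fin] at hcard
    have h2 : Module.finrank ℝ (LinearMap.range X.mulVecLin) = X.rank := rfl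
    omega
  obtain ⟨g, hg, b, hb⟩ := Fintype.not_linearIndependent_iff.mp hdep
  refine ⟨g, fun u => ?_, b, hb⟩
  have := congrFun hg u
  simpa [Finset.sum_apply] using this

end Aux18

open Filter Topology

/-- If `G` has no loops and contains a clique of size `k > 2`,
then for every integer `j` with `3 ≤ j ≤ k` the set `P(Sⁿ₍ⱼ₋₂₎₊)` is not
closed. -/
theorem stmt18 (n : ℕ) (hn : 2 ≤ n) (E : Set (Fin n × Fin n))
    (hup : ∀ p ∈ E, p.1 ≤ p.2)
    (hloop : ∀ v : Fin n, (v, v) ∉ E)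
    (k : ℕ) (hk : 2 < k) (S : Finset (Fin n)) (hcard : S.card = k)
    (hclique : ∀ u ∈ S, ∀ v ∈ S, u ≠ v → ((u, v) ∈ E ∨ (v, u) ∈ E))
    (j : ℕ) (hj3 : 3 ≤ j) (hjk : j ≤ k) :
    ¬ IsClosed (proj E '' psdRank (Fin n) (j - 2)) := by
  obtain ⟨m, rfl⟩ : ∃ m, j = m + 3 := ⟨j - 3, by omega⟩
  have h32 : m + 3 - 2 = m + 1 := rfl
  rw [h32]
  intro hclosed
  obtain ⟨T, hTS, hT⟩ : ∃ T ⊆ S, T.card = m + 3 :=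
    Finset.exists_subset_card_eq (by omega)
  set c : Fin (m+3) → Fin n := fun p => T.orderEmbOfFin hT p with hc_def
  have hcmono : StrictMono c := (T.orderEmbOfFin hT).strictMono
  have hcinj : Function.Injective c := hcmono.injective
  have hcS : ∀ p, c p ∈ S := fun p => hTS (Finset.orderEmbOfFin_mem T hT p)
  have hadj : ∀ p q : Fin (m+3), p ≠ q → ((c p, c q) ∈ E ∨ (c q, c p) ∈ E) :=
    fun p q hpq => hclique _ (hcS p) _ (hcS q) (fun h => hpq (hcinj h))
  have hedge_lt : ∀ {u v : Fin n}, (u, v) ∈ E → u < v := by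
    intro u v huv
    rcases lt_or_eq_of_le (hup _ huv) with h | h
    · exact h
    · exact absurd huv (by rw [show u = v from h]; exact hloop v)
  -- the limit point
  set ystar : E → ℝ := proj E (Xlim m n c) with hystar
  -- Step 1 : `ystar` lies in the closure of the projected set.
  have hclosure : ystar ∈ closure (proj E '' psdRank (Fin n) (m+1)) := by
    have hmem : ∀ N : ℕ,
        proj E ((matA m n ((N : ℝ)+1) c)ᴴ * matA m n ((N : ℝ)+1) c) ∈
          proj E '' psdRank (Fin n) (m+1) := by
      intro N
      refine ⟨_, ⟨Matrix.posSemidef_conjTranspose_mul_self _, ?_⟩, rfl⟩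
      rw [Matrix.rank_conjTranspose_mul_self]
      have := Matrix.rank_le_card_height (matA m n ((N : ℝ)+1) c)
      simpa using this
    refine mem_closure_of_tendsto (b := (atTop : Filter ℕ))
      (f := fun N : ℕ => proj E ((matA m n ((N : ℝ)+1) c)ᴴ * matA m n ((N : ℝ)+1) c))
      ?_ (Filter.Eventually.of_forall hmem)
    rw [tendsto_pi_nhds]
    intro e
    obtain ⟨⟨u, v⟩, he⟩ := e
    have huv : u < v := hedge_lt he
    have htne : ∀ N : ℕ, ((N : ℝ)+1) ≠ 0 := fun N => by positivity
    have hinv : Tendsto (fun N : ℕ => ((N : ℝ)+1)⁻¹) atTop (𝓝 0) := by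
      simpa [one_div] using tendsto_one_div_add_atTop_nhds_zero_nat (𝕜 := ℝ)
    show Tendsto
      (fun N : ℕ => ((matA m n ((N : ℝ)+1) c)ᴴ * matA m n ((N : ℝ)+1) c) u v) atTop
      (𝓝 (Xlim m n c u v))
    by_cases hu : ∃ p, c p = u
    · by_cases hv : ∃ q, c q = v
      · obtain ⟨p, rfl⟩ := hu
        obtain ⟨q, rfl⟩ := hv
        have hpq : p < q := hcmono.lt_iff_lt.mp huv
        have hpqn : (p : ℕ) < (q : ℕ) := hpq
        rw [Xlim_apply hcinj]
        have hmax : max (p : ℕ) (q : ℕ) = (q : ℕ) := Nat.max_eq_right hpqn.le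
        have hmin : min (p : ℕ) (q : ℕ) = (p : ℕ) := Nat.min_eq_left hpqn.le
        have hq3 : (q : ℕ) ≤ m + 2 := by omega
        rcases lt_or_eq_of_le hq3 with hq | hq
        · -- q ≤ m+1 : entries `-1 + C/t²`
          have hell : ell m (p : ℕ) (q : ℕ) = -1 := by
            rw [ell, hmax, if_neg (by omega)]
          rw [hell]
          have hfun : (fun N : ℕ =>
              ((matA m n ((N : ℝ)+1) c)ᴴ * matA m n ((N : ℝ)+1) c) (c p) (c q))
              = fun N : ℕ => -1 +
                (((Finset.range (m+1)).filter (fun i => (q : ℕ) < i+1)).card : ℝ) *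
                  (((N : ℝ)+1)⁻¹ * ((N : ℝ)+1)⁻¹) := by
            funext N
            rw [entry_apply _ hcinj, dotw_lt m (htne N) hpqn (by omega)]
          rw [hfun]
          have h0 : Tendsto (fun N : ℕ => -1 +
              (((Finset.range (m+1)).filter (fun i => (q : ℕ) < i+1)).card : ℝ) *
                (((N : ℝ)+1)⁻¹ * ((N : ℝ)+1)⁻¹)) atTop
              (𝓝 (-1 + (((Finset.range (m+1)).filter
                (fun i => (q : ℕ) < i+1)).card : ℝ) * (0 * 0))) :=
            Tendsto.add tendsto_const_nhds
              ((hinv.mul hinv).const_mul _)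
          simpa using h0
        · -- q = m+2
          rcases lt_or_eq_of_le (by omega : (p : ℕ) ≤ m + 1) with hp | hp
          · -- p ≤ m : entries `1/t²`, limit 0
            have hell : ell m (p : ℕ) (q : ℕ) = 0 := by
              rw [ell, hmax, if_pos hq, hmin, if_neg (by omega)]
            rw [hell]
            have hfun : (fun N : ℕ =>
                ((matA m n ((N : ℝ)+1) c)ᴴ * matA m n ((N : ℝ)+1) c) (c p) (c q))
                = fun N : ℕ => ((N : ℝ)+1)⁻¹ * ((N : ℝ)+1)⁻¹ := by
              funext N
              rw [entry_apply _ hcinj, hq, dotw_mid m _ (by omega)]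
            rw [hfun]
            simpa using hinv.mul hinv
          · -- p = m+1 : entries constantly -1
            have hell : ell m (p : ℕ) (q : ℕ) = -1 := by
              rw [ell, hmax, if_pos hq, hmin, if_pos hp]
            rw [hell]
            have hfun : (fun N : ℕ =>
                ((matA m n ((N : ℝ)+1) c)ᴴ * matA m n ((N : ℝ)+1) c) (c p) (c q))
                = fun _ : ℕ => (-1 : ℝ) := by
              funext N
              rw [entry_apply _ hcinj, hq, hp, dotw_last m (htne N)]
            rw [hfun]
            exact tendsto_const_nhds
      · push_neg at hv
        have hz : (∀ p, c p ≠ u) ∨ (∀ p, c p ≠ v) := Or.inr hv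
        rw [Xlim_zero hz]
        have hfun : (fun N : ℕ =>
            ((matA m n ((N : ℝ)+1) c)ᴴ * matA m n ((N : ℝ)+1) c) u v)
            = fun _ : ℕ => (0 : ℝ) := funext fun N => entry_zero _ hz
        rw [hfun]
        exact tendsto_const_nhds
    · push_neg at hu
      have hz : (∀ p, c p ≠ u) ∨ (∀ p, c p ≠ v) := Or.inl hu
      rw [Xlim_zero hz]
      have hfun : (fun N : ℕ =>
          ((matA m n ((N : ℝ)+1) c)ᴴ * matA m n ((N : ℝ)+1) c) u v)
          = fun _ : ℕ => (0 : ℝ) := funext fun N => entry_zero _ hz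
      rw [hfun]
      exact tendsto_const_nhds
  -- Step 2 : `ystar` is not in the projected set.
  have hnot : ystar ∉ proj E '' psdRank (Fin n) (m+1) := by
    rintro ⟨X, ⟨hpsd, hrank⟩, hproj⟩
    have hsymX : ∀ a b : Fin n, X a b = X b a := by
      intro a b
      have h1 := congrFun (congrFun hpsd.1 a) b
      simpa [conjTranspose_apply] using h1.symm
    have hXent : ∀ p q : Fin (m+3), p ≠ q → X (c p) (c q) = ell m (p : ℕ) (q : ℕ) := by
      intro p q hpq
      rcases hadj p q hpq with hE | hE
      · have h1 : X (c p) (c q) = Xlim m n c (c p) (c q) :=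
          congrFun hproj ⟨(c p, c q), hE⟩
        rw [h1, Xlim_apply hcinj]
      · have h1 : X (c q) (c p) = Xlim m n c (c q) (c p) :=
          congrFun hproj ⟨(c q, c p), hE⟩
        rw [hsymX, h1, Xlim_apply hcinj, ell_symm]
    obtain ⟨ca, hz, b₀, hb₀⟩ := cols_dep X hrank (fun b : Fin (m+2) => c b.castSucc)
    have hdiagpos : ∀ a : Fin (m+2), (0 : ℝ) < X (c a.castSucc) (c a.castSucc) + 1 :=
      fun a => by have := psd_diag_nonneg hpsd (c a.castSucc); linarith
    have hkey : ∀ a : Fin (m+2),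
        ca a * (X (c a.castSucc) (c a.castSucc) + 1) = ∑ b, ca b := by
      intro a
      have h1 := hz (c a.castSucc)
      have h2 : ∀ b : Fin (m+2), ca b * X (c a.castSucc) (c b.castSucc)
          = ca b * (-1) +
            (if b = a then ca b * (X (c a.castSucc) (c a.castSucc) + 1) else 0) := by
        intro b
        by_cases hba : b = a
        · subst hba; rw [if_pos rfl]; ring
        · rw [if_neg hba, add_zero]
          have hne : (a.castSucc : Fin (m+3)) ≠ b.castSucc :=
            fun h => hba (Fin.castSucc_injective _ h).symm
          rw [hXent _ _ hne]
          have hell : ell m ((a.castSucc : Fin (m+3)) : ℕ) ((b.castSucc : Fin (m+3)) : ℕ)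
              = -1 := by
            rw [ell, if_neg ?_]
            have ha := a.isLt
            have hb := b.isLt
            simp only [Fin.coe_castSucc]
            omega
          rw [hell]
      rw [Finset.sum_congr rfl (fun b _ => h2 b), Finset.sum_add_distrib,
        Finset.sum_ite_eq' Finset.univ a
          (fun b => ca b * (X (c a.castSucc) (c a.castSucc) + 1)),
        if_pos (Finset.mem_univ a)] at h1
      have hsum : ∑ b : Fin (m+2), ca b * (-1) = -(∑ b, ca b) := by
        rw [← Finset.sum_neg_distrib]
        exact Finset.sum_congr rfl fun b _ => by ring
      rw [hsum] at h1
      linarith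
    have hs0 : (∑ b, ca b) ≠ 0 := by
      intro h0
      apply hb₀
      have h1 := hkey b₀
      rw [h0] at h1
      rcases mul_eq_zero.mp h1 with h | h
      · exact h
      · exact absurd h (ne_of_gt (hdiagpos b₀))
    have hlast : ca ⟨m+1, by omega⟩ ≠ 0 := by
      intro h0
      apply hs0
      rw [← hkey ⟨m+1, by omega⟩, h0, zero_mul]
    have hfin := hz (c ⟨m+2, by omega⟩)
    have h3 : ∀ b : Fin (m+2), ca b * X (c ⟨m+2, by omega⟩) (c b.castSucc)
        = (if b = (⟨m+1, by omega⟩ : Fin (m+2)) then -ca b else 0) := by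
      intro b
      have hb := b.isLt
      have hne : (⟨m+2, by omega⟩ : Fin (m+3)) ≠ b.castSucc := by
        intro h
        have := congrArg Fin.val h
        simp only [Fin.coe_castSucc] at this
        omega
      rw [hXent _ _ hne]
      have hval : ((⟨m+2, by omega⟩ : Fin (m+3)) : ℕ) = m+2 := rfl
      by_cases hbm : (b : ℕ) = m+1
      · have hbeq : b = (⟨m+1, by omega⟩ : Fin (m+2)) := Fin.ext hbm
        rw [if_pos hbeq]
        have hell : ell m ((⟨m+2, by omega⟩ : Fin (m+3)) : ℕ)
            ((b.castSucc : Fin (m+3)) : ℕ) = -1 := by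
          rw [ell, if_pos ?_, if_pos ?_] <;>
            · simp only [Fin.coe_castSucc, hval]
              omega
        rw [hell]; ring
      · have hbne : b ≠ (⟨m+1, by omega⟩ : Fin (m+2)) :=
          fun h => hbm (by rw [h])
        rw [if_neg hbne]
        have hell : ell m ((⟨m+2, by omega⟩ : Fin (m+3)) : ℕ)
            ((b.castSucc : Fin (m+3)) : ℕ) = 0 := by
          rw [ell, if_pos ?_, if_neg ?_] <;>
            · simp only [Fin.coe_castSucc, hval]
              omega
        rw [hell]; ring
    rw [Finset.sum_congr rfl (fun b _ => h3 b),
      Finset.sum_ite_eq' Finset.univ (⟨m+1, by omega⟩ : Fin (m+2))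
        (fun b => -ca b),
      if_pos (Finset.mem_univ _)] at hfin
    exact hlast (neg_eq_zero.mp hfin)
  exact hnot (hclosed.closure_subset hclosure)
end
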